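/- arXiv:2512.15530 — 6 statements merged into one kernel-verified Lean document; each statement's English description precedes it below -/
import Mathlib

section
/- Let (X,d) be a separable metric space without isolated points and suppose φ : X → X is a Lipschitz map with ergodic Borel probability measure μ. Then for any ε > 0 and δ > 0 and μ-almost every x ∈ X there exists R ≥ 1 such that for all t ∈ ℕ with t ≥ 1, Σ_{j=0}^{t-1} Π_{i=j}^{t-1} (L_φ(φ^i(x)) + ε) < R · e^{t(λ⁺_φ(ε, μ) + δ)}. -/
open MeasureTheory Filter Topology ENNReal

set_option linter.unusedSectionVars false
set_option maxHeartbeats 1000000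

noncomputable section

/-- `μ` is an invariant measure of `f` and every invariant Borel set has measure `0` or `1`. -/
def IsErgodicM {α : Type*} [MeasurableSpace α] (f : α → α) (μ : Measure α) : Prop :=
  μ.map f = μ ∧ ∀ A : Set α, MeasurableSet A → f ⁻¹' A = A → μ A = 0 ∨ μ A = 1

/-- Pointwise Lipschitz constant of `ψ` at `x`, w.r.t. the distance function `dA`:
`L_ψ(x) = lim_{δ→0⁺} sup_{0 < dA x y < δ} dA (ψ x) (ψ y) / dA x y`. -/
def ptLipD {A : Type*} (dA : A → A → ℝ) (ψ : A → A) (x : A) : ℝ :=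
  ⨅ δ : {r : ℝ // 0 < r},
    sSup ((fun y => dA (ψ x) (ψ y) / dA x y) '' {y | 0 < dA x y ∧ dA x y < δ.1})

/-- Metric spatial Lyapunov exponent `λ_ψ(ε, μ) = ∫ log (L_ψ(x) + ε) dμ(x)`. -/
def spatialLyapD {A : Type*} [MeasurableSpace A] (dA : A → A → ℝ) (ψ : A → A) (ε : ℝ)
    (μ : Measure A) : ℝ :=
  ∫ x, Real.log (ptLipD dA ψ x + ε) ∂μ

namespace Stmt1Aux

section MeasurablePart

variable {X : Type*} [MeasurableSpace X]

/-- Birkhoff sum. -/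
def bS (φ : X → X) (f : X → ℝ) (n : ℕ) (x : X) : ℝ := ∑ i ∈ Finset.range n, f (φ^[i] x)

lemma bS_add (φ : X → X) (f : X → ℝ) (a b : ℕ) (x : X) :
    bS φ f (a + b) x = bS φ f a x + bS φ f b (φ^[a] x) := by
  induction b with
  | zero => simp [bS]
  | succ b ih =>
      have h1 : a + (b + 1) = (a + b) + 1 := by omega
      rw [h1]
      unfold bS at ih ⊢
      rw [Finset.sum_range_succ, Finset.sum_range_succ, ih]
      have : φ^[a + b] x = φ^[b] (φ^[a] x) := by
        rw [show a + b = b + a by omega, Function.iterate_add_apply]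
      rw [this]; ring

lemma bS_measurable {φ : X → X} (hφ : Measurable φ) {f : X → ℝ} (hf : Measurable f) (n : ℕ) :
    Measurable (bS φ f n) :=
  Finset.measurable_sum _ fun i _ => hf.comp (hφ.iterate i)

lemma abs_bS_le {φ : X → X} {f : X → ℝ} {M : ℝ} (hM : ∀ x, |f x| ≤ M) (n : ℕ) (x : X) :
    |bS φ f n x| ≤ n * M := by
  calc |bS φ f n x| ≤ ∑ i ∈ Finset.range n, |f (φ^[i] x)| := Finset.abs_sum_le_sum_abs _ _
    _ ≤ ∑ _i ∈ Finset.range n, M := Finset.sum_le_sum fun i _ => hM _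
    _ = n * M := by simp [mul_comm]

/-- The set of points where the Birkhoff sums frequently exceed `n * c`. -/
def freqSet (φ : X → X) (f : X → ℝ) (c : ℝ) : Set X :=
  {x | ∀ m : ℕ, ∃ n, m ≤ n ∧ (n : ℝ) * c < bS φ f n x}

lemma freqSet_measurable {φ : X → X} (hφ : Measurable φ) {f : X → ℝ} (hf : Measurable f)
    (c : ℝ) : MeasurableSet (freqSet φ f c) := by
  have : freqSet φ f c =
      ⋂ m : ℕ, ⋃ n : ℕ, ⋃ _h : m ≤ n, {x | (n : ℝ) * c < bS φ f n x} := by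
    ext x; simp [freqSet]
  rw [this]
  exact MeasurableSet.iInter fun m => MeasurableSet.iUnion fun n => MeasurableSet.iUnion
    fun _ => measurableSet_lt measurable_const (bS_measurable hφ hf n)


/-- Katznelson–Weiss style estimate: if the Birkhoff sums frequently exceed `n * c'`
almost everywhere, then `c' ≤ ∫ f`. -/
theorem kw {φ : X → X} (hφm : Measurable φ) (μ : Measure X) [IsProbabilityMeasure μ]
    (hinv : μ.map φ = μ) {f : X → ℝ} (hf : Measurable f) {M : ℝ} (hM : ∀ x, |f x| ≤ M)
    {c' : ℝ} (hfull : μ (freqSet φ f c') = 1) : c' ≤ ∫ x, f x ∂μ := by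
  by_contra hlt
  push_neg at hlt
  obtain ⟨x₀, -⟩ := nonempty_of_measure_ne_zero (by rw [hfull]; exact one_ne_zero)
  have hM0 : 0 ≤ M := le_trans (abs_nonneg _) (hM x₀)
  set η : ℝ := c' - ∫ x, f x ∂μ with hηdef
  have hη0 : 0 < η := by simp only [hηdef]; linarith
  set K : ℝ := |c'| + M + 1 with hKdef
  have hK0 : 0 < K := by positivity
  -- the sets A_N
  set AN : ℕ → Set X := fun N => {x | ∃ n, 1 ≤ n ∧ n ≤ N ∧ (n : ℝ) * c' < bS φ f n x}
    with hANdef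
  have hANmeas : ∀ N, MeasurableSet (AN N) := by
    intro N
    have : AN N = ⋃ n : ℕ, ⋃ _h : 1 ≤ n ∧ n ≤ N, {x | (n : ℝ) * c' < bS φ f n x} := by
      ext x; simp [hANdef]; tauto
    rw [this]
    exact MeasurableSet.iUnion fun n => MeasurableSet.iUnion
      fun _ => measurableSet_lt measurable_const (bS_measurable hφm hf n)
  have hmono : Monotone AN := by
    intro N N' hNN' x ⟨n, h1, h2, h3⟩
    exact ⟨n, h1, le_trans h2 hNN', h3⟩
  have hsub : freqSet φ f c' ⊆ ⋃ N, AN N := by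
    intro x hx
    obtain ⟨n, hn1, hlt'⟩ := hx 1
    exact Set.mem_iUnion.2 ⟨n, n, hn1, le_refl n, hlt'⟩
  have hU : μ (⋃ N, AN N) = 1 :=
    le_antisymm prob_le_one (hfull ▸ measure_mono hsub)
  -- complements tend to measure zero
  have htend : Tendsto (fun N => μ ((AN N)ᶜ)) atTop (𝓝 0) := by
    have h1 : Tendsto (μ ∘ fun N => (AN N)ᶜ) atTop (𝓝 (μ (⋂ N, (AN N)ᶜ))) :=
      tendsto_measure_iInter_atTop (fun N => ((hANmeas N).compl).nullMeasurableSet)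
        (fun N N' h => Set.compl_subset_compl.2 (hmono h)) ⟨0, measure_ne_top μ _⟩
    have h2 : μ (⋂ N, (AN N)ᶜ) = 0 := by
      rw [← Set.compl_iUnion, prob_compl_eq_zero_iff (MeasurableSet.iUnion hANmeas)]
      exact hU
    rw [h2] at h1; exact h1
  obtain ⟨N, hN⟩ := (htend.eventually_lt_const
    (show (0:ℝ≥0∞) < ENNReal.ofReal (η / (3 * K)) by
      simp [ENNReal.ofReal_pos]; positivity)).exists
  set γN : ℝ := (μ ((AN N)ᶜ)).toReal with hγdef
  have hγlt : γN < η / (3 * K) := ENNReal.toReal_lt_of_lt_ofReal hN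
  have hγ0 : 0 ≤ γN := ENNReal.toReal_nonneg
  -- the indicator of the bad set
  set b : X → ℝ := Set.indicator ((AN N)ᶜ) (fun _ => 1) with hbdef
  have hbmeas : Measurable b := Measurable.indicator measurable_const (hANmeas N).compl
  have hb01 : ∀ y, 0 ≤ b y ∧ b y ≤ 1 := by
    intro y; simp only [hbdef]
    by_cases hy : y ∈ (AN N)ᶜ <;> simp [Set.indicator_apply, hy]
  -- pointwise claim, by strong induction
  have claim : ∀ L : ℕ, ∀ x : X,
      (L : ℝ) * c' - K * N - K * ∑ i ∈ Finset.range L, b (φ^[i] x) ≤ bS φ f L x := by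
    intro L
    induction L using Nat.strong_induction_on with
    | _ L IH =>
      intro x
      have hsum0 : (0:ℝ) ≤ ∑ i ∈ Finset.range L, b (φ^[i] x) :=
        Finset.sum_nonneg fun i _ => (hb01 _).1
      by_cases hL : L ≤ N
      · -- base case
        have h1 : |bS φ f L x| ≤ (L : ℝ) * M := abs_bS_le hM L x
        have hLN : (L : ℝ) ≤ (N : ℝ) := Nat.cast_le.2 hL
        have hL0 : (0:ℝ) ≤ (L : ℝ) := Nat.cast_nonneg L
        have h2 : -((L:ℝ) * M) ≤ bS φ f L x := neg_le_of_abs_le h1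
        have h3 : (L:ℝ) * c' ≤ (L:ℝ) * |c'| :=
          mul_le_mul_of_nonneg_left (le_abs_self c') hL0
        nlinarith [abs_nonneg c']
      · push_neg at hL
        have hL1 : 1 ≤ L := by omega
        by_cases hx : x ∈ AN N
        · -- good step
          obtain ⟨n, hn1, hnN, hSn⟩ := hx
          have hnL : n ≤ L := le_trans hnN (le_of_lt hL)
          have hsplit : bS φ f L x = bS φ f n x + bS φ f (L - n) (φ^[n] x) := by
            have h := bS_add φ f n (L - n) x
            rwa [Nat.add_sub_cancel' hnL] at h
          have hIH := IH (L - n) (by omega) (φ^[n] x)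
          have hsum : ∑ i ∈ Finset.range (L - n), b (φ^[i] (φ^[n] x))
              ≤ ∑ i ∈ Finset.range L, b (φ^[i] x) := by
            have he : ∀ i, b (φ^[i] (φ^[n] x)) = b (φ^[n + i] x) := by
              intro i
              rw [Nat.add_comm, Function.iterate_add_apply]
            calc ∑ i ∈ Finset.range (L - n), b (φ^[i] (φ^[n] x))
                = ∑ i ∈ Finset.range (L - n), b (φ^[n + i] x) := by
                  exact Finset.sum_congr rfl fun i _ => he i
              _ = ∑ i ∈ Finset.Ico n L, b (φ^[i] x) := by
                  rw [Finset.sum_Ico_eq_sum_range]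
              _ ≤ ∑ i ∈ Finset.range L, b (φ^[i] x) := by
                  apply Finset.sum_le_sum_of_subset_of_nonneg
                  · intro i hi
                    simp only [Finset.mem_Ico] at hi
                    exact Finset.mem_range.2 hi.2
                  · intro i _ _; exact (hb01 _).1
          have hcast : ((L - n : ℕ) : ℝ) = (L : ℝ) - (n : ℝ) := by
            rw [Nat.cast_sub hnL]
          have hK2 : K * ∑ i ∈ Finset.range (L - n), b (φ^[i] (φ^[n] x))
              ≤ K * ∑ i ∈ Finset.range L, b (φ^[i] x) :=
            mul_le_mul_of_nonneg_left hsum (le_of_lt hK0)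
          rw [hsplit]
          rw [hcast] at hIH
          linarith
        · -- bad step
          have hsplit : bS φ f L x = f x + bS φ f (L - 1) (φ x) := by
            have h := bS_add φ f 1 (L - 1) x
            rw [Nat.add_sub_cancel' hL1] at h
            simpa [bS, Finset.sum_range_one] using h
          have hIH := IH (L - 1) (by omega) (φ x)
          have hbx : b x = 1 := by
            have hx' : x ∈ (AN N)ᶜ := hx
            simp [hbdef, Set.indicator_of_mem hx']
          have hsum : ∑ i ∈ Finset.range L, b (φ^[i] x)
              = b x + ∑ i ∈ Finset.range (L - 1), b (φ^[i] (φ x)) := by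
            have h1 : L = (L - 1) + 1 := by omega
            conv_lhs => rw [h1, Finset.sum_range_succ']
            simp only [Function.iterate_succ_apply, Function.iterate_zero_apply]
            ring
          have hfx : -M ≤ f x := neg_le_of_abs_le (hM x)
          have hcast : ((L - 1 : ℕ) : ℝ) = (L : ℝ) - 1 := by
            rw [Nat.cast_sub hL1]; simp
          rw [hsplit, hsum, hbx]
          rw [hcast] at hIH
          have hc'abs : c' ≤ |c'| := le_abs_self c'
          linarith
  -- integrate the claim
  have hmapi : ∀ i : ℕ, μ.map (φ^[i]) = μ := by
    intro i
    induction i with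
    | zero => simp
    | succ i ih =>
        rw [Function.iterate_succ, ← Measure.map_map (hφm.iterate i) hφm, hinv, ih]
  have hfint : ∀ i : ℕ, Integrable (fun x => f (φ^[i] x)) μ := by
    intro i
    refine Integrable.mono' (integrable_const M)
      ((hf.comp (hφm.iterate i)).aestronglyMeasurable) (ae_of_all _ fun x => ?_)
    rw [Real.norm_eq_abs]; exact hM _
  have hfeq : ∀ i : ℕ, ∫ x, f (φ^[i] x) ∂μ = ∫ x, f x ∂μ := by
    intro i
    rw [← integral_map (hφm.iterate i).aemeasurable
      (by rw [hmapi i]; exact hf.aestronglyMeasurable), hmapi i]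
  have hbint : ∀ i : ℕ, Integrable (fun x => b (φ^[i] x)) μ := by
    intro i
    refine Integrable.mono' (integrable_const 1)
      ((hbmeas.comp (hφm.iterate i)).aestronglyMeasurable) (ae_of_all _ fun x => ?_)
    rw [Real.norm_eq_abs, abs_of_nonneg (hb01 _).1]; exact (hb01 _).2
  have hbeq : ∀ i : ℕ, ∫ x, b (φ^[i] x) ∂μ = γN := by
    intro i
    rw [← integral_map (hφm.iterate i).aemeasurable
      (by rw [hmapi i]; exact hbmeas.aestronglyMeasurable), hmapi i]
    simp only [hbdef, hγdef]
    exact integral_indicator_one (hANmeas N).compl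
  -- integral of the claim
  have hint : ∀ L : ℕ, (L : ℝ) * c' - K * N - K * ((L : ℝ) * γN) ≤ (L : ℝ) * ∫ x, f x ∂μ := by
    intro L
    have hlhs : Integrable (fun x => (L : ℝ) * c' - K * N
        - K * ∑ i ∈ Finset.range L, b (φ^[i] x)) μ := by
      apply Integrable.sub (integrable_const _)
      exact (integrable_finset_sum _ fun i _ => hbint i).const_mul K
    have hrhs : Integrable (bS φ f L) μ := by
      have : bS φ f L = fun x => ∑ i ∈ Finset.range L, f (φ^[i] x) := rfl
      rw [this]
      exact integrable_finset_sum _ fun i _ => hfint i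
    have hmono2 := integral_mono hlhs hrhs (fun x => claim L x)
    have hL1 : ∫ x, ((L : ℝ) * c' - K * N - K * ∑ i ∈ Finset.range L, b (φ^[i] x)) ∂μ
        = (L : ℝ) * c' - K * N - K * ((L : ℝ) * γN) := by
      rw [integral_sub (integrable_const _) ((integrable_finset_sum _
        fun i _ => hbint i).const_mul K)]
      rw [integral_const]
      simp only [measure_univ, ENNReal.toReal_one, probReal_univ, one_smul]
      rw [integral_const_mul, integral_finset_sum _ fun i _ => hbint i]
      have : ∑ i ∈ Finset.range L, ∫ x, b (φ^[i] x) ∂μ = (L : ℝ) * γN := by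
        rw [Finset.sum_congr rfl fun i _ => hbeq i]
        simp [mul_comm]
      rw [this]
    have hL2 : ∫ x, bS φ f L x ∂μ = (L : ℝ) * ∫ x, f x ∂μ := by
      have : (fun x => bS φ f L x) = fun x => ∑ i ∈ Finset.range L, f (φ^[i] x) := rfl
      rw [this, integral_finset_sum _ fun i _ => hfint i,
        Finset.sum_congr rfl fun i _ => hfeq i]
      simp [mul_comm]
    rw [hL1, hL2] at hmono2
    exact hmono2
  -- choose L large and derive a contradiction
  obtain ⟨L₀, hL₀⟩ := exists_nat_gt (3 * K * N / η)
  set L : ℕ := L₀ + 1 with hLdef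
  have hL0 : (0:ℝ) < L := by positivity
  have hLgt : 3 * K * N / η < (L : ℝ) := by
    have : (L₀ : ℝ) ≤ (L : ℝ) := by simp [hLdef]
    linarith
  clear_value η K γN L
  have h1 := hint L
  have h2 : K * (N : ℝ) < (L : ℝ) * η / 3 := by
    rw [div_lt_iff₀ hη0] at hLgt
    nlinarith
  have h3 : K * γN < η / 3 := by
    rw [lt_div_iff₀ (by positivity : (0:ℝ) < 3 * K)] at hγlt
    nlinarith
  have h4 : (L : ℝ) * (K * γN) ≤ (L : ℝ) * (η / 3) :=
    mul_le_mul_of_nonneg_left (le_of_lt h3) (le_of_lt hL0)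
  have hηeq : (L : ℝ) * c' - (L : ℝ) * ∫ x, f x ∂μ = (L : ℝ) * η := by
    simp only [hηdef]; ring
  have e1 : K * ((L:ℝ) * γN) = (L:ℝ) * (K * γN) := by ring
  rw [e1] at h1
  have h5 : (L:ℝ) * c' - (L:ℝ) * ∫ x, f x ∂μ < (L:ℝ) * η / 3 + (L:ℝ) * (η / 3) := by
    linarith
  rw [hηeq] at h5
  have h7 : (0:ℝ) < (L : ℝ) * η := mul_pos hL0 hη0
  linarith


lemma bS_shift (φ : X → X) (f : X → ℝ) (n : ℕ) (x : X) :
    bS φ f n (φ x) = bS φ f (n + 1) x - f x := by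
  have h := bS_add φ f 1 n x
  rw [show 1 + n = n + 1 by omega] at h
  simp only [bS, Finset.sum_range_one, Function.iterate_zero_apply, Function.iterate_one] at h ⊢
  rw [h]; ring

/-- Characterization of membership in the intersection of frequent sets. -/
lemma mem_iInter_freq {φ : X → X} {f : X → ℝ} {c : ℝ} (x : X) :
    (x ∈ ⋂ k : ℕ, freqSet φ f (c - 1 / (k + 1))) ↔
      ∀ ε : ℝ, 0 < ε → ∀ m : ℕ, ∃ n, m ≤ n ∧ (n : ℝ) * (c - ε) < bS φ f n x := by
  constructor
  · intro h ε hε m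
    obtain ⟨k, hk⟩ := exists_nat_one_div_lt hε
    obtain ⟨n, hn, hlt⟩ := (Set.mem_iInter.1 h k) m
    refine ⟨n, hn, lt_of_le_of_lt ?_ hlt⟩
    have h1 : c - ε ≤ c - 1 / (k + 1) := by linarith
    exact mul_le_mul_of_nonneg_left h1 (Nat.cast_nonneg n)
  · intro h
    refine Set.mem_iInter.2 fun k => fun m => h (1 / (k + 1)) (by positivity) m

lemma iInter_freq_inv (φ : X → X) (f : X → ℝ) {M : ℝ} (hM : ∀ x, |f x| ≤ M) (c : ℝ) :
    φ ⁻¹' (⋂ k : ℕ, freqSet φ f (c - 1 / (k + 1)))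
      = ⋂ k : ℕ, freqSet φ f (c - 1 / (k + 1)) := by
  ext x
  simp only [Set.mem_preimage]
  rw [mem_iInter_freq, mem_iInter_freq]
  have hMc : (0:ℝ) ≤ M + |c| := by
    have := le_trans (abs_nonneg _) (hM x); positivity
  constructor
  · -- from φ x to x
    intro h ε hε m
    obtain ⟨n₀, hn₀⟩ := exists_nat_gt (4 * (M + |c|) / ε + 4)
    obtain ⟨n, hn, hlt⟩ := h (ε / 2) (by positivity) (max m n₀)
    have hnm : m ≤ n := le_trans (le_max_left _ _) hn
    have hnn₀ : (n₀ : ℝ) ≤ (n : ℝ) := Nat.cast_le.2 (le_trans (le_max_right _ _) hn)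
    refine ⟨n + 1, by omega, ?_⟩
    rw [bS_shift] at hlt
    have hfx : -M ≤ f x := neg_le_of_abs_le (hM x)
    have hcc : c ≤ |c| := le_abs_self c
    have hne : (n₀:ℝ) * ε > 4 * (M + |c|) + 4 * ε := by
      have h2 : (4 * (M + |c|) / ε + 4) * ε = 4 * (M + |c|) + 4 * ε := by
        field_simp
      nlinarith
    have hcast : ((n + 1 : ℕ) : ℝ) = (n : ℝ) + 1 := by push_cast; ring
    rw [hcast]
    nlinarith [mul_le_mul_of_nonneg_right hnn₀ (le_of_lt hε)]
  · -- from x to φ x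
    intro h ε hε m
    obtain ⟨n₀, hn₀⟩ := exists_nat_gt (4 * (M + |c|) / ε + 4)
    obtain ⟨n', hn', hlt⟩ := h (ε / 2) (by positivity) (max (m + 1) n₀)
    have hn'1 : 1 ≤ n' := le_trans (le_trans (by omega) (le_max_left (m+1) n₀)) hn'
    have hnm : m + 1 ≤ n' := le_trans (le_max_left _ _) hn'
    have hnn₀ : (n₀ : ℝ) ≤ (n' : ℝ) := Nat.cast_le.2 (le_trans (le_max_right _ _) hn')
    refine ⟨n' - 1, by omega, ?_⟩
    have hsh : bS φ f (n' - 1) (φ x) = bS φ f n' x - f x := by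
      have := bS_shift φ f (n' - 1) x
      rwa [show n' - 1 + 1 = n' by omega] at this
    rw [hsh]
    have hfx : f x ≤ M := le_of_abs_le (hM x)
    have hcc : c ≤ |c| := le_abs_self c
    have hcc' : -|c| ≤ c := neg_abs_le c
    have hne : (n₀:ℝ) * ε > 4 * (M + |c|) + 4 * ε := by
      have h2 : (4 * (M + |c|) / ε + 4) * ε = 4 * (M + |c|) + 4 * ε := by
        field_simp
      nlinarith
    have hcast : ((n' - 1 : ℕ) : ℝ) = (n' : ℝ) - 1 := by
      rw [Nat.cast_sub hn'1]; simp
    rw [hcast]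
    nlinarith [mul_le_mul_of_nonneg_right hnn₀ (le_of_lt hε)]

/-- Birkhoff-type upper bound: almost surely the Birkhoff sums eventually stay
below `n * c` whenever `∫ f < c`. -/
theorem key {φ : X → X} (hφm : Measurable φ) (μ : Measure X) [IsProbabilityMeasure μ]
    (hinv : μ.map φ = μ)
    (herg : ∀ A : Set X, MeasurableSet A → φ ⁻¹' A = A → μ A = 0 ∨ μ A = 1)
    {f : X → ℝ} (hf : Measurable f) {M : ℝ} (hM : ∀ x, |f x| ≤ M)
    {c : ℝ} (hc : ∫ x, f x ∂μ < c) :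
    ∀ᵐ x ∂μ, ∃ m : ℕ, ∀ n, m ≤ n → bS φ f n x ≤ (n : ℝ) * c := by
  set B := ⋂ k : ℕ, freqSet φ f (c - 1 / (k + 1)) with hBdef
  have hBmeas : MeasurableSet B :=
    MeasurableSet.iInter fun k => freqSet_measurable hφm hf _
  have hBinv : φ ⁻¹' B = B := iInter_freq_inv φ f hM c
  rcases herg B hBmeas hBinv with h0 | h1
  · have hsub : freqSet φ f c ⊆ B := by
      intro x hx
      refine Set.mem_iInter.2 fun k m => ?_
      obtain ⟨n, hn, hlt⟩ := hx m
      refine ⟨n, hn, lt_of_le_of_lt ?_ hlt⟩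
      have h1 : c - 1 / ((k:ℝ) + 1) ≤ c := by
        have : (0:ℝ) < 1 / ((k:ℝ) + 1) := by positivity
        linarith
      exact mul_le_mul_of_nonneg_left h1 (Nat.cast_nonneg n)
    have hnull : μ (freqSet φ f c) = 0 := measure_mono_null hsub h0
    rw [ae_iff]
    convert hnull using 2
    ext x
    simp only [Set.mem_setOf_eq, freqSet]
    push_neg
    rfl
  · exfalso
    obtain ⟨k, hk⟩ := exists_nat_one_div_lt (sub_pos.2 hc)
    have hc' : ∫ x, f x ∂μ < c - 1 / (k + 1) := by linarith
    have hfull : μ (freqSet φ f (c - 1 / (k + 1))) = 1 :=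
      le_antisymm prob_le_one (h1 ▸ measure_mono (Set.iInter_subset _ k))
    exact absurd (kw hφm μ hinv hf hM hfull) (not_le.2 hc')


end MeasurablePart

section MetricPart

variable {X : Type*} [MetricSpace X]

/-- The sup of difference quotients at scale `δ`. -/
def rq (φ : X → X) (δ : ℝ) (x : X) : ℝ :=
  sSup ((fun y => dist (φ x) (φ y) / dist x y) '' {y | 0 < dist x y ∧ dist x y < δ})

lemma ptLipD_eq (φ : X → X) (x : X) :
    ptLipD dist φ x = ⨅ δ : {r : ℝ // 0 < r}, rq φ δ.1 x := rfl

lemma rq_set_nonempty (hX : ∀ x : X, (𝓝[≠] x).NeBot) (φ : X → X) (x : X) {δ : ℝ}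
    (hδ : 0 < δ) :
    ((fun y => dist (φ x) (φ y) / dist x y) '' {y | 0 < dist x y ∧ dist x y < δ}).Nonempty := by
  have hmem : Metric.ball x δ ∩ {x}ᶜ ∈ 𝓝[≠] x :=
    Filter.inter_mem (mem_nhdsWithin_of_mem_nhds (Metric.ball_mem_nhds x hδ))
      self_mem_nhdsWithin
  obtain ⟨y, hyb, hyne⟩ := (hX x).nonempty_of_mem hmem
  refine ⟨_, ⟨y, ⟨?_, ?_⟩, rfl⟩⟩
  · rw [dist_pos]
    exact fun h => hyne (by simp [h.symm])
  · rw [dist_comm]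
    exact Metric.mem_ball.1 hyb

lemma rq_bddAbove {φ : X → X} {Kφ : NNReal} (hφ : LipschitzWith Kφ φ) (x : X) (δ : ℝ) :
    ∀ v ∈ (fun y => dist (φ x) (φ y) / dist x y) '' {y | 0 < dist x y ∧ dist x y < δ},
      v ≤ (Kφ : ℝ) := by
  rintro v ⟨y, ⟨hy0, -⟩, rfl⟩
  rw [div_le_iff₀ hy0]
  exact hφ.dist_le_mul x y

lemma rq_nonneg_mem {φ : X → X} (x : X) (δ : ℝ) :
    ∀ v ∈ (fun y => dist (φ x) (φ y) / dist x y) '' {y | 0 < dist x y ∧ dist x y < δ},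
      0 ≤ v := by
  rintro v ⟨y, ⟨hy0, -⟩, rfl⟩
  exact div_nonneg dist_nonneg (le_of_lt hy0)

lemma rq_nonneg (hX : ∀ x : X, (𝓝[≠] x).NeBot) {φ : X → X} {Kφ : NNReal}
    (hφ : LipschitzWith Kφ φ) (x : X) {δ : ℝ} (hδ : 0 < δ) : 0 ≤ rq φ δ x := by
  obtain ⟨v, hv⟩ := rq_set_nonempty hX φ x hδ
  exact le_trans (rq_nonneg_mem x δ v hv) (le_csSup ⟨(Kφ:ℝ), fun w hw => rq_bddAbove hφ x δ w hw⟩ hv)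

lemma rq_le (hX : ∀ x : X, (𝓝[≠] x).NeBot) {φ : X → X} {Kφ : NNReal}
    (hφ : LipschitzWith Kφ φ) (x : X) {δ : ℝ} (hδ : 0 < δ) : rq φ δ x ≤ (Kφ : ℝ) :=
  csSup_le (rq_set_nonempty hX φ x hδ) (rq_bddAbove hφ x δ)

lemma rq_mono (hX : ∀ x : X, (𝓝[≠] x).NeBot) {φ : X → X} {Kφ : NNReal}
    (hφ : LipschitzWith Kφ φ) (x : X) {δ₁ δ₂ : ℝ} (h0 : 0 < δ₁) (h : δ₁ ≤ δ₂) :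
    rq φ δ₁ x ≤ rq φ δ₂ x := by
  apply csSup_le_csSup ⟨(Kφ:ℝ), fun w hw => rq_bddAbove hφ x δ₂ w hw⟩
    (rq_set_nonempty hX φ x h0)
  rintro v ⟨y, ⟨hy0, hyδ⟩, rfl⟩
  exact ⟨y, ⟨hy0, lt_of_lt_of_le hyδ h⟩, rfl⟩

lemma ptLipD_nonneg (hX : ∀ x : X, (𝓝[≠] x).NeBot) {φ : X → X} {Kφ : NNReal}
    (hφ : LipschitzWith Kφ φ) (x : X) : 0 ≤ ptLipD dist φ x := by
  rw [ptLipD_eq]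
  exact le_ciInf fun δ => rq_nonneg hX hφ x δ.2

lemma ptLipD_le (hX : ∀ x : X, (𝓝[≠] x).NeBot) {φ : X → X} {Kφ : NNReal}
    (hφ : LipschitzWith Kφ φ) (x : X) : ptLipD dist φ x ≤ (Kφ : ℝ) := by
  rw [ptLipD_eq]
  refine le_trans (ciInf_le ⟨0, ?_⟩ ⟨1, one_pos⟩) (rq_le hX hφ x one_pos)
  rintro v ⟨δ, rfl⟩
  exact rq_nonneg hX hφ x δ.2

lemma ptLipD_eq_rat (hX : ∀ x : X, (𝓝[≠] x).NeBot) {φ : X → X} {Kφ : NNReal}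
    (hφ : LipschitzWith Kφ φ) (x : X) :
    ptLipD dist φ x = ⨅ q : {q : ℚ // 0 < q}, rq φ (q : ℚ) x := by
  rw [ptLipD_eq]
  have hbb1 : BddBelow (Set.range fun δ : {r : ℝ // 0 < r} => rq φ δ.1 x) := by
    refine ⟨0, ?_⟩
    rintro v ⟨δ, rfl⟩
    exact rq_nonneg hX hφ x δ.2
  have hbb2 : BddBelow (Set.range fun q : {q : ℚ // 0 < q} => rq φ (q : ℚ) x) := by
    refine ⟨0, ?_⟩
    rintro v ⟨p, rfl⟩
    exact rq_nonneg hX hφ x (by exact_mod_cast p.2)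
  apply le_antisymm
  · apply le_ciInf
    intro q
    exact ciInf_le hbb1 ⟨((q : ℚ) : ℝ), by exact_mod_cast q.2⟩
  · apply le_ciInf
    intro δ
    obtain ⟨q, hq0, hqδ⟩ := exists_rat_btwn δ.2
    have hq0' : (0:ℝ) < (q : ℝ) := by exact_mod_cast hq0
    refine le_trans (ciInf_le hbb2 ⟨q, by exact_mod_cast hq0⟩)
      (rq_mono hX hφ x hq0' (le_of_lt hqδ))

lemma rq_lsc (hX : ∀ x : X, (𝓝[≠] x).NeBot) {φ : X → X} {Kφ : NNReal}
    (hφ : LipschitzWith Kφ φ) {δ : ℝ} (hδ : 0 < δ) : LowerSemicontinuous (rq φ δ) := by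
  intro x c hc
  obtain ⟨v, hv, hcv⟩ := exists_lt_of_lt_csSup (rq_set_nonempty hX φ x hδ) hc
  obtain ⟨y, ⟨hy0, hyδ⟩, rfl⟩ := hv
  have hcont : ContinuousAt (fun z => dist (φ z) (φ y) / dist z y) x := by
    apply ContinuousAt.div
    · exact ((hφ.continuous.dist continuous_const).continuousAt)
    · exact ((continuous_id.dist continuous_const).continuousAt)
    · exact ne_of_gt hy0
  have h1 : ∀ᶠ z in 𝓝 x, c < dist (φ z) (φ y) / dist z y :=
    hcont.eventually_const_lt hcv
  have hcont2 : ContinuousAt (fun z => dist z y) x :=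
    ((continuous_id.dist continuous_const).continuousAt)
  have h2 : ∀ᶠ z in 𝓝 x, 0 < dist z y := hcont2.eventually_const_lt hy0
  have h3 : ∀ᶠ z in 𝓝 x, dist z y < δ := hcont2.eventually_lt_const hyδ
  filter_upwards [h1, h2, h3] with z hz1 hz2 hz3
  exact lt_of_lt_of_le hz1
    (le_csSup ⟨(Kφ:ℝ), fun w hw => rq_bddAbove hφ z δ w hw⟩ ⟨y, ⟨hz2, hz3⟩, rfl⟩)

lemma ptLipD_measurable [MeasurableSpace X] [BorelSpace X]
    (hX : ∀ x : X, (𝓝[≠] x).NeBot) {φ : X → X} {Kφ : NNReal} (hφ : LipschitzWith Kφ φ) :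
    Measurable (ptLipD dist φ) := by
  have h : ptLipD dist φ = fun x => ⨅ q : {q : ℚ // 0 < q}, rq φ (q : ℚ) x :=
    funext (ptLipD_eq_rat hX hφ)
  rw [h]
  exact Measurable.iInf fun q => ((rq_lsc hX hφ (by exact_mod_cast q.2)).measurable)


end MetricPart

end Stmt1Aux

/-- For a Lipschitz self-map `φ` of a separable metric space without isolated
points with ergodic measure `μ`: for any `ε, δ > 0` and `μ`-a.e. `x` there is `R ≥ 1` with
`∑_{j=0}^{t-1} ∏_{i=j}^{t-1} (L_φ(φ^i x) + ε) < R e^{t (λ⁺_φ(ε,μ) + δ)}` for all `t ≥ 1`. -/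
theorem statement1 {X : Type*} [MetricSpace X] [TopologicalSpace.SeparableSpace X]
    [MeasurableSpace X] [BorelSpace X]
    (hX : ∀ x : X, Filter.NeBot (𝓝[≠] x))
    (φ : X → X) (Kφ : NNReal) (hφ : LipschitzWith Kφ φ)
    (μ : Measure X) [IsProbabilityMeasure μ] (herg : IsErgodicM φ μ) :
    ∀ ε > (0 : ℝ), ∀ δ > (0 : ℝ), ∀ᵐ x ∂μ, ∃ R : ℝ, 1 ≤ R ∧
      ∀ t : ℕ, 1 ≤ t →
        ∑ j ∈ Finset.range t, ∏ i ∈ Finset.Ico j t, (ptLipD dist φ (φ^[i] x) + ε) <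
          R * Real.exp (t * (max (spatialLyapD dist φ ε μ) 0 + δ)) := by
  intro ε hε δ hδ
  have hφm : Measurable φ := hφ.continuous.measurable
  set f : X → ℝ := fun x => Real.log (ptLipD dist φ x + ε) with hfdef
  have hptpos : ∀ y : X, 0 < ptLipD dist φ y + ε := fun y => by
    have := Stmt1Aux.ptLipD_nonneg hX hφ y; linarith
  have hfm : Measurable f := by
    apply Real.measurable_log.comp
    exact (Stmt1Aux.ptLipD_measurable hX hφ).add measurable_const
  set M : ℝ := |Real.log ε| + |Real.log ((Kφ : ℝ) + ε)| with hMdef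
  have hM0 : 0 ≤ M := by positivity
  have hMb : ∀ x, |f x| ≤ M := by
    intro x
    have hlog1 : Real.log ε ≤ f x := Real.log_le_log hε (by
      have := Stmt1Aux.ptLipD_nonneg hX hφ x; linarith)
    have hlog2 : f x ≤ Real.log ((Kφ : ℝ) + ε) := Real.log_le_log (hptpos x) (by
      have := Stmt1Aux.ptLipD_le hX hφ x; linarith)
    rw [abs_le]
    constructor
    · have h2 : -|Real.log ε| ≤ Real.log ε := neg_abs_le _
      have h3 : 0 ≤ |Real.log ((Kφ : ℝ) + ε)| := abs_nonneg _
      simp only [hMdef]; linarith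
    · have h2 : Real.log ((Kφ : ℝ) + ε) ≤ |Real.log ((Kφ : ℝ) + ε)| := le_abs_self _
      have h3 : 0 ≤ |Real.log ε| := abs_nonneg _
      simp only [hMdef]; linarith
  set lam : ℝ := spatialLyapD dist φ ε μ with hlamdef
  have hlam : ∫ x, f x ∂μ = lam := rfl
  have h1 := Stmt1Aux.key hφm μ herg.1 herg.2 hfm hMb
    (c := lam + δ / 4) (by rw [hlam]; linarith)
  have hMb' : ∀ x, |(fun y => -f y) x| ≤ M := fun x => by
    simp only [abs_neg]; exact hMb x
  have hintneg : ∫ x, (fun y => -f y) x ∂μ = -lam := by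
    simp only
    rw [integral_neg, hlam]
  have h2 := Stmt1Aux.key hφm μ herg.1 herg.2 hfm.neg hMb'
    (c := -lam + δ / 4) (by show ∫ x, (fun y => -f y) x ∂μ < _; rw [hintneg]; linarith)
  have hexpg : ∀ y : X, ptLipD dist φ y + ε = Real.exp (f y) := by
    intro y
    have hfe : f y = Real.log (ptLipD dist φ y + ε) := rfl
    rw [hfe, Real.exp_log (hptpos _)]
  clear_value f lam M
  filter_upwards [h1, h2] with x hx1 hx2
  obtain ⟨m₁, hm₁⟩ := hx1
  obtain ⟨m₂, hm₂⟩ := hx2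
  have hneg : ∀ n, Stmt1Aux.bS φ (fun y => -f y) n x = -Stmt1Aux.bS φ f n x := by
    intro n; simp [Stmt1Aux.bS]
  set m : ℕ := max m₁ m₂ with hmdef
  set C : ℝ := (m : ℝ) * (M + |lam|) + 1 with hCdef
  have hC0 : 0 < C := by positivity
  have hCge : ∀ n : ℕ, n < m → ((n:ℝ) * M ≤ (m:ℝ) * M ∧ (n:ℝ) * |lam| ≤ (m:ℝ) * |lam|) := by
    intro n h
    have hnm : (n : ℝ) ≤ (m : ℝ) := by exact_mod_cast le_of_lt h
    exact ⟨mul_le_mul_of_nonneg_right hnm hM0, mul_le_mul_of_nonneg_right hnm (abs_nonneg _)⟩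
  have hmm1 : m₁ ≤ m := le_max_left _ _
  have hmm2 : m₂ ≤ m := le_max_right _ _
  clear_value m
  have hub : ∀ n : ℕ, Stmt1Aux.bS φ f n x ≤ (n : ℝ) * lam + (n : ℝ) * (δ / 4) + C := by
    intro n
    rcases le_or_gt m n with h | h
    · have hn := hm₁ n (le_trans hmm1 h)
      have he : (n : ℝ) * (lam + δ / 4) = (n : ℝ) * lam + (n : ℝ) * (δ / 4) := by ring
      linarith
    · have habs := Stmt1Aux.abs_bS_le (φ := φ) hMb n x
      have h1' : Stmt1Aux.bS φ f n x ≤ (n : ℝ) * M := le_of_abs_le habs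
      have hnm : (n : ℝ) ≤ (m : ℝ) := by exact_mod_cast le_of_lt h
      have hn0 : (0:ℝ) ≤ (n : ℝ) := Nat.cast_nonneg n
      have h2' : -((n : ℝ) * |lam|) ≤ (n : ℝ) * lam := by
        nlinarith [neg_abs_le lam]
      have h3' : (n : ℝ) * M ≤ (m : ℝ) * M := mul_le_mul_of_nonneg_right hnm hM0
      have h4' : (n : ℝ) * |lam| ≤ (m : ℝ) * |lam| :=
        mul_le_mul_of_nonneg_right hnm (abs_nonneg _)
      have h5' : 0 ≤ (n : ℝ) * (δ / 4) := by positivity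
      simp only [hCdef]
      linarith
  have hlb : ∀ n : ℕ, (n : ℝ) * lam - (n : ℝ) * (δ / 4) - C ≤ Stmt1Aux.bS φ f n x := by
    intro n
    rcases le_or_gt m n with h | h
    · have hn : Stmt1Aux.bS φ (fun y => -f y) n x ≤ _ := hm₂ n (le_trans hmm2 h)
      rw [hneg] at hn
      have he : (n : ℝ) * (-lam + δ / 4) = -((n : ℝ) * lam) + (n : ℝ) * (δ / 4) := by ring
      linarith
    · have habs := Stmt1Aux.abs_bS_le (φ := φ) hMb n x
      have h1' : -((n : ℝ) * M) ≤ Stmt1Aux.bS φ f n x := neg_le_of_abs_le habs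
      have hnm : (n : ℝ) ≤ (m : ℝ) := by exact_mod_cast le_of_lt h
      have hn0 : (0:ℝ) ≤ (n : ℝ) := Nat.cast_nonneg n
      have h2' : (n : ℝ) * lam ≤ (n : ℝ) * |lam| := by
        nlinarith [le_abs_self lam]
      have h3' : (n : ℝ) * M ≤ (m : ℝ) * M := mul_le_mul_of_nonneg_right hnm hM0
      have h4' : (n : ℝ) * |lam| ≤ (m : ℝ) * |lam| :=
        mul_le_mul_of_nonneg_right hnm (abs_nonneg _)
      have h5' : 0 ≤ (n : ℝ) * (δ / 4) := by positivity
      simp only [hCdef]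
      linarith
  set lamp : ℝ := max lam 0 with hlampdef
  have hlamp0 : 0 ≤ lamp := le_max_right _ _
  refine ⟨2 / δ * Real.exp (2 * C) + 1, ?_, ?_⟩
  · have hpos : 0 < 2 / δ * Real.exp (2 * C) := by positivity
    linarith
  intro t _ht
  have hexp : ∀ i : ℕ, ptLipD dist φ (φ^[i] x) + ε = Real.exp (f (φ^[i] x)) := by
    intro i
    exact hexpg _
  have hterm : ∀ j ∈ Finset.range t, ∏ i ∈ Finset.Ico j t, (ptLipD dist φ (φ^[i] x) + ε)
      ≤ Real.exp ((t : ℝ) * lamp + (t : ℝ) * (δ / 2) + 2 * C) := by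
    intro j hj
    have hjt : j ≤ t := le_of_lt (Finset.mem_range.1 hj)
    have hprod : ∏ i ∈ Finset.Ico j t, (ptLipD dist φ (φ^[i] x) + ε)
        = Real.exp (Stmt1Aux.bS φ f t x - Stmt1Aux.bS φ f j x) := by
      have hsum : Stmt1Aux.bS φ f t x - Stmt1Aux.bS φ f j x
          = ∑ i ∈ Finset.Ico j t, f (φ^[i] x) :=
        (Finset.sum_Ico_eq_sub _ hjt).symm
      calc ∏ i ∈ Finset.Ico j t, (ptLipD dist φ (φ^[i] x) + ε)
          = ∏ i ∈ Finset.Ico j t, Real.exp (f (φ^[i] x)) :=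
            Finset.prod_congr rfl fun i _ => hexp i
        _ = Real.exp (∑ i ∈ Finset.Ico j t, f (φ^[i] x)) := (Real.exp_sum _ _).symm
        _ = Real.exp (Stmt1Aux.bS φ f t x - Stmt1Aux.bS φ f j x) := by rw [hsum]
    rw [hprod, Real.exp_le_exp]
    have hu := hub t
    have hl := hlb j
    have hjt' : (j : ℝ) ≤ (t : ℝ) := Nat.cast_le.2 hjt
    have hj0 : (0:ℝ) ≤ (j : ℝ) := Nat.cast_nonneg j
    have ht0 : (0:ℝ) ≤ (t : ℝ) := Nat.cast_nonneg t
    have hcase : (t : ℝ) * lam - (j : ℝ) * lam ≤ (t : ℝ) * lamp := by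
      rcases le_or_gt 0 lam with hl' | hl'
      · have hle : lam ≤ lamp := le_max_left _ _
        nlinarith
      · nlinarith
    have hδ4 : (j : ℝ) * (δ / 4) ≤ (t : ℝ) * (δ / 4) := by nlinarith
    linarith
  calc ∑ j ∈ Finset.range t, ∏ i ∈ Finset.Ico j t, (ptLipD dist φ (φ^[i] x) + ε)
      ≤ ∑ _j ∈ Finset.range t, Real.exp ((t : ℝ) * lamp + (t : ℝ) * (δ / 2) + 2 * C) :=
        Finset.sum_le_sum hterm
    _ = (t : ℝ) * Real.exp ((t : ℝ) * lamp + (t : ℝ) * (δ / 2) + 2 * C) := by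
        rw [Finset.sum_const, Finset.card_range, nsmul_eq_mul]
    _ ≤ (2 / δ * Real.exp (2 * C)) * Real.exp ((t : ℝ) * (lamp + δ)) := by
        have hx0 : (t : ℝ) * (δ / 2) ≤ Real.exp ((t : ℝ) * (δ / 2)) := by
          have h := Real.add_one_le_exp ((t : ℝ) * (δ / 2))
          linarith
        have ht2 : (t : ℝ) ≤ 2 / δ * Real.exp ((t : ℝ) * (δ / 2)) := by
          calc (t : ℝ) = 2 / δ * ((t : ℝ) * (δ / 2)) := by field_simp
            _ ≤ 2 / δ * Real.exp ((t : ℝ) * (δ / 2)) :=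
                mul_le_mul_of_nonneg_left hx0 (by positivity)
        calc (t : ℝ) * Real.exp ((t : ℝ) * lamp + (t : ℝ) * (δ / 2) + 2 * C)
            ≤ (2 / δ * Real.exp ((t : ℝ) * (δ / 2)))
              * Real.exp ((t : ℝ) * lamp + (t : ℝ) * (δ / 2) + 2 * C) :=
              mul_le_mul_of_nonneg_right ht2 (le_of_lt (Real.exp_pos _))
          _ = (2 / δ * Real.exp (2 * C)) * Real.exp ((t : ℝ) * (lamp + δ)) := by
              rw [mul_assoc, ← Real.exp_add,
                show (t : ℝ) * (δ / 2) + ((t : ℝ) * lamp + (t : ℝ) * (δ / 2) + 2 * C)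
                  = 2 * C + (t : ℝ) * (lamp + δ) by ring,
                Real.exp_add, ← mul_assoc]
    _ < (2 / δ * Real.exp (2 * C) + 1) * Real.exp ((t : ℝ) * (lamp + δ)) := by
        have hE := Real.exp_pos ((t : ℝ) * (lamp + δ))
        nlinarith

end
end

section
/- Let (X,d) be a compact metric space and let φ, φ̂ : X → X be homeomorphisms that are topologically conjugate by a homeomorphism g : X → X, i.e. g ∘ φ = φ̂ ∘ g. Let μ be an ergodic Borel probability measure for φ, and let ν be a Borel probability measure absolutely continuous with respect to μ. Suppose g⁻¹ is nonsingular with respect to μ, i.e. (g⁻¹)_*μ ≪ μ. Then limsup_{T→∞} d_P( (1/T) Σ_{t=0}^{T-1} φ^t_*ν, (1/T) Σ_{t=0}^{T-1} φ̂^t_*ν ) ≤ d_P(μ, g_*μ). -/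
open MeasureTheory Filter Topology ENNReal BoundedContinuousFunction

noncomputable section

/-- Pushforward of a probability measure under a measurable map. -/
def pushPM {α β : Type*} [MeasurableSpace α] [MeasurableSpace β]
    (f : α → β) (hf : Measurable f) (ν : ProbabilityMeasure α) : ProbabilityMeasure β :=
  ⟨(ν : Measure α).map f, Measure.isProbabilityMeasure_map hf.aemeasurable⟩

/-- Cesàro average `(1/(T+1)) ∑_{t=0}^{T} s t` of a sequence of probability measures. -/
def avgPM {α : Type*} [MeasurableSpace α] (s : ℕ → ProbabilityMeasure α) (T : ℕ) :
    ProbabilityMeasure α :=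
  ⟨((T + 1 : ℕ) : ℝ≥0∞)⁻¹ • ∑ t ∈ Finset.range (T + 1), (s t : Measure α), by
    constructor
    simp only [Measure.smul_apply, Measure.finset_sum_apply, measure_univ, Finset.sum_const,
      Finset.card_range, nsmul_eq_mul, mul_one, smul_eq_mul]
    rw [ENNReal.inv_mul_cancel] <;> simp⟩

section Aux

variable {X : Type*} [MeasurableSpace X]

/-- The Koopman operator on `L²(μ)` as a continuous linear map. -/
def koop (μ : Measure X) {φ : X → X} (hφ : MeasurePreserving φ μ μ) :
    Lp ℝ 2 μ →L[ℝ] Lp ℝ 2 μ :=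
  LinearMap.mkContinuous
    { toFun := Lp.compMeasurePreserving φ hφ
      map_add' := map_add _
      map_smul' := by
        intro c G
        apply Lp.ext
        filter_upwards [Lp.coeFn_compMeasurePreserving (c • G) hφ,
          Lp.coeFn_smul c (Lp.compMeasurePreserving φ hφ G),
          hφ.quasiMeasurePreserving.ae_eq_comp (Lp.coeFn_smul c G),
          Lp.coeFn_compMeasurePreserving G hφ] with x h1 h2 h3 h4
        simp only [RingHom.id_apply, h1, h2]
        simp only [Function.comp_apply, Pi.smul_apply] at h3 h4 ⊢
        rw [h3, h4] }
    1 (by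
      intro G
      simpa using (Lp.norm_compMeasurePreserving G hφ).le)

lemma koop_coeFn (μ : Measure X) {φ : X → X} (hφ : MeasurePreserving φ μ μ) (G : Lp ℝ 2 μ) :
    koop μ hφ G =ᵐ[μ] ⇑G ∘ φ :=
  Lp.coeFn_compMeasurePreserving G hφ

lemma koop_norm_le (μ : Measure X) {φ : X → X} (hφ : MeasurePreserving φ μ μ) :
    ‖koop μ hφ‖ ≤ 1 :=
  LinearMap.mkContinuous_norm_le _ zero_le_one _

lemma koop_iterate (μ : Measure X) {φ : X → X} (hφ : MeasurePreserving φ μ μ) (G : Lp ℝ 2 μ) :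
    ∀ n, ((koop μ hφ)^[n] G : Lp ℝ 2 μ) =ᵐ[μ] ⇑G ∘ φ^[n] := by
  intro n
  induction n with
  | zero => simp
  | succ n ih =>
    rw [Function.iterate_succ_apply']
    filter_upwards [koop_coeFn μ hφ ((koop μ hφ)^[n] G),
      hφ.quasiMeasurePreserving.ae_eq_comp ih] with x h1 h2
    simp only [Function.comp_apply] at h1 h2 ⊢
    rw [h1, h2, Function.iterate_succ_apply]

section LemA

lemma Lp_coeFn_finset_sum {E : Type*} [NormedAddCommGroup E] {p : ℝ≥0∞} {μ : Measure X}
    {ι : Type*} (s : Finset ι) (f : ι → Lp E p μ) :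
    ⇑(∑ i ∈ s, f i) =ᵐ[μ] fun x => ∑ i ∈ s, f i x := by
  classical
  induction s using Finset.induction with
  | empty => simp only [Finset.sum_empty]; exact Lp.coeFn_zero E p μ
  | insert _ _ h ih =>
    rename_i a s
    rw [Finset.sum_insert h]
    filter_upwards [Lp.coeFn_add (f a) (∑ i ∈ s, f i), ih] with x h1 h2
    simp only [h1, Pi.add_apply, h2, Finset.sum_insert h]

variable [TopologicalSpace X] [OpensMeasurableSpace X]

set_option maxHeartbeats 1000000 in
set_option synthInstance.maxHeartbeats 200000 in
lemma lemA (φ : X → X) (μ ν : Measure X) [IsProbabilityMeasure μ] [IsProbabilityMeasure ν]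
    (hφ : MeasurePreserving φ μ μ) (hergE : Ergodic φ μ) (habs : ν ≪ μ) (f : X →ᵇ ℝ) :
    Tendsto (fun N : ℕ => (N : ℝ)⁻¹ * ∑ n ∈ Finset.range N, ∫ x, f (φ^[n] x) ∂ν) atTop
      (𝓝 (∫ x, f x ∂μ)) := by
  set c : ℝ := ∫ x, f x ∂μ with hc
  have hfm : MemLp (⇑f) 2 μ :=
    MemLp.of_bound f.continuous.measurable.aestronglyMeasurable ‖f‖
      (ae_of_all _ f.norm_coe_le_norm)
  set F : Lp ℝ 2 μ := hfm.toLp ⇑f with hF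
  set U := koop μ hφ with hU
  set B : ℕ → X → ℝ := fun N x => (N : ℝ)⁻¹ • ∑ n ∈ Finset.range N, f (φ^[n] x) with hB
  have hBmeas : ∀ N, Measurable (B N) := by
    intro N
    have : Measurable fun x => ∑ n ∈ Finset.range N, f (φ^[n] x) :=
      Finset.measurable_sum _ fun n _ => f.continuous.measurable.comp (hφ.measurable.iterate n)
    exact this.const_smul ((N : ℝ)⁻¹)
  have hBbd : ∀ N x, ‖B N x‖ ≤ ‖f‖ := by
    intro N x
    rcases Nat.eq_zero_or_pos N with h | h
    · simp [hB, h, norm_nonneg]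
    · have h1 : ‖B N x‖ ≤ (N : ℝ)⁻¹ * ∑ n ∈ Finset.range N, ‖f (φ^[n] x)‖ := by
        have e1 : ‖B N x‖ = (N : ℝ)⁻¹ * ‖∑ n ∈ Finset.range N, f (φ^[n] x)‖ := by
          rw [hB]
          simp only [smul_eq_mul, norm_mul, Real.norm_eq_abs]
          rw [abs_of_nonneg (by positivity : (0:ℝ) ≤ (N : ℝ)⁻¹)]
        rw [e1]
        exact mul_le_mul_of_nonneg_left (norm_sum_le _ _) (by positivity)
      refine h1.trans ?_
      have h2 : ∑ n ∈ Finset.range N, ‖f (φ^[n] x)‖ ≤ N * ‖f‖ := by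
        calc ∑ n ∈ Finset.range N, ‖f (φ^[n] x)‖ ≤ ∑ n ∈ Finset.range N, ‖f‖ :=
              Finset.sum_le_sum fun n _ => f.norm_coe_le_norm _
          _ = N * ‖f‖ := by simp [mul_comm]
      calc (N : ℝ)⁻¹ * ∑ n ∈ Finset.range N, ‖f (φ^[n] x)‖ ≤ (N : ℝ)⁻¹ * (N * ‖f‖) := by
            gcongr
        _ = ‖f‖ := by
            rw [← mul_assoc, inv_mul_cancel₀ (by positivity), one_mul]
  -- identify Birkhoff averages of the Koopman operator with `B N` a.e.
  have hGB : ∀ N, ⇑(birkhoffAverage ℝ U _root_.id N F) =ᵐ[μ] B N := by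
    intro N
    have hterm : ∀ᵐ x ∂μ, ∀ k ∈ Finset.range N, (U^[k] F : X → ℝ) x = f (φ^[k] x) := by
      rw [Filter.eventually_all_finset]
      intro k _
      filter_upwards [koop_iterate μ hφ F k,
        (hφ.iterate k).quasiMeasurePreserving.ae_eq_comp hfm.coeFn_toLp] with x h1 h2
      simp only [Function.comp_apply] at h1 h2
      rw [h1, h2]
    have hsum := Lp_coeFn_finset_sum (Finset.range N) (fun k => U^[k] F)
    have hsmul := Lp.coeFn_smul (N : ℝ)⁻¹ (∑ k ∈ Finset.range N, U^[k] F)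
    have hdef : birkhoffAverage ℝ U _root_.id N F
        = (N : ℝ)⁻¹ • ∑ k ∈ Finset.range N, U^[k] F := rfl
    rw [hdef]
    filter_upwards [hsmul, hsum, hterm] with x h1 h2 h3
    rw [h1]
    simp only [Pi.smul_apply, h2, hB, smul_eq_mul]
    congr 1
    exact Finset.sum_congr rfl h3
  -- the constant function as an element of L²
  set cE : Lp ℝ 2 μ := (memLp_const c).toLp (fun _ => c) with hcE
  have hcEfn : ⇑cE =ᵐ[μ] fun _ => c := (memLp_const c).coeFn_toLp
  -- cE is a fixed point of U
  have hcmem : cE ∈ U.eqLocus (1 : Lp ℝ 2 μ →L[ℝ] Lp ℝ 2 μ) := by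
    rw [LinearMap.mem_eqLocus, ContinuousLinearMap.coe_coe, ContinuousLinearMap.coe_coe,
      ContinuousLinearMap.one_apply]
    apply Lp.ext
    filter_upwards [koop_coeFn μ hφ cE, hφ.quasiMeasurePreserving.ae_eq_comp hcEfn,
      hcEfn] with x h1 h2 h3
    simp only [Function.comp_apply] at h1 h2
    rw [h1, h2, h3]
  -- orthogonality
  have horth : ∀ w ∈ U.eqLocus (1 : Lp ℝ 2 μ →L[ℝ] Lp ℝ 2 μ),
      (inner ℝ (F - cE) w : ℝ) = 0 := by
    intro w hw
    rw [LinearMap.mem_eqLocus] at hw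
    have hwfix : U w = w := hw
    have hwinv : ⇑w ∘ φ =ᵐ[μ] ⇑w := by
      have h := koop_coeFn μ hφ w
      rw [hwfix] at h
      exact h.symm
    obtain ⟨k, hk⟩ := hergE.ae_eq_const_of_ae_eq_comp_ae (Lp.aestronglyMeasurable w) hwinv
    rw [MeasureTheory.L2.inner_def]
    have : ∫ a, (inner ℝ ((F - cE) a) (w a) : ℝ) ∂μ = ∫ a, (f a - c) * k ∂μ := by
      apply integral_congr_ae
      filter_upwards [Lp.coeFn_sub F cE, hfm.coeFn_toLp, hcEfn, hk] with a h1 h2 h3 h4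
      simp only [RCLike.inner_apply, conj_trivial, h1, Pi.sub_apply, h2, h3, h4,
        Function.const_apply]
      rw [hF, h2, mul_comm]
    rw [this]
    rw [integral_mul_const, integral_sub (f.integrable μ) (integrable_const c)]
    simp [hc]
  have hproj : ((Submodule.orthogonalProjectionOnto
      (U.eqLocus (1 : Lp ℝ 2 μ →L[ℝ] Lp ℝ 2 μ)) F) : Lp ℝ 2 μ) = cE :=
    Submodule.eq_starProjection_of_mem_of_inner_eq_zero hcmem horth
  -- mean ergodic theorem
  have hME := U.tendsto_birkhoffAverage_orthogonalProjection (koop_norm_le μ hφ) F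
  rw [hproj] at hME
  -- convergence of eLpNorms
  have heLp : Tendsto (fun N => eLpNorm (B N - fun _ => c) 2 μ) atTop (𝓝 0) := by
    have h := (Lp.tendsto_Lp_iff_tendsto_eLpNorm' _ cE).mp hME
    refine h.congr fun N => ?_
    exact eLpNorm_congr_ae ((hGB N).sub hcEfn)
  have hTIM : TendstoInMeasure μ B atTop (fun _ => c) :=
    tendstoInMeasure_of_tendsto_eLpNorm (by norm_num)
      (fun n => (hBmeas n).aestronglyMeasurable) aestronglyMeasurable_const heLp
  -- integral identity
  have hint : ∀ N : ℕ, ∫ x, B N x ∂ν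
      = (N : ℝ)⁻¹ * ∑ n ∈ Finset.range N, ∫ x, f (φ^[n] x) ∂ν := by
    intro N
    have hInt : ∀ n ∈ Finset.range N, Integrable (fun x => f (φ^[n] x)) ν := by
      intro n _
      refine Integrable.mono' (integrable_const ‖f‖)
        (f.continuous.measurable.comp (hφ.measurable.iterate n)).aestronglyMeasurable
        (ae_of_all _ fun x => f.norm_coe_le_norm _)
    simp only [hB, smul_eq_mul]
    rw [integral_const_mul, integral_finset_sum _ hInt]
  -- conclusion by the subsequence principle
  have key : Tendsto (fun N => ∫ x, B N x ∂ν) atTop (𝓝 c) := by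
    apply tendsto_of_subseq_tendsto
    intro ns hns
    have hTIM' : TendstoInMeasure μ (fun n => B (ns n)) atTop (fun _ => c) :=
      fun ε hε => (hTIM ε hε).comp hns
    obtain ⟨ms, -, hae⟩ := hTIM'.exists_seq_tendsto_ae
    refine ⟨ms, ?_⟩
    have haeν : ∀ᵐ x ∂ν, Tendsto (fun i => B (ns (ms i)) x) atTop (𝓝 c) := habs.ae_le hae
    have := tendsto_integral_of_dominated_convergence (F := fun i => B (ns (ms i)))
      (fun _ => ‖f‖) (fun n => (hBmeas _).aestronglyMeasurable) (integrable_const _)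
      (fun n => ae_of_all _ fun x => hBbd _ x) haeν
    simpa using this
  exact key.congr fun N => hint N


lemma IsErgodicM.ergodic {α : Type*} [MeasurableSpace α] {f : α → α} {μ : Measure α}
    [IsProbabilityMeasure μ] (hm : Measurable f) (h : IsErgodicM f μ) : Ergodic f μ := by
  refine ⟨⟨hm, h.1⟩, ⟨fun s hs hfs => ?_⟩⟩
  rw [Filter.eventuallyConst_set']
  rcases h.2 s hs hfs with h0 | h1
  · exact Or.inl (ae_eq_empty.mpr h0)
  · exact Or.inr (ae_eq_univ.mpr ((prob_compl_eq_zero_iff hs).mpr h1))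

lemma integral_avgPM {s : ℕ → ProbabilityMeasure X} (T : ℕ) (f : X → ℝ)
    (hf : ∀ t, Integrable f (s t : Measure X)) :
    ∫ x, f x ∂((avgPM s T : ProbabilityMeasure X) : Measure X)
      = (((T : ℝ) + 1))⁻¹ * ∑ t ∈ Finset.range (T + 1), ∫ x, f x ∂(s t : Measure X) := by
  show ∫ x, f x ∂(((T + 1 : ℕ) : ℝ≥0∞)⁻¹ • ∑ t ∈ Finset.range (T + 1), (s t : Measure X)) = _
  rw [integral_smul_measure, integral_finset_sum_measure (fun t _ => hf t),
    ENNReal.toReal_inv, smul_eq_mul]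
  congr 1
  simp only [Nat.cast_add, Nat.cast_one]
  rw [ENNReal.toReal_add (ENNReal.natCast_ne_top T) ENNReal.one_ne_top]
  simp

end LemA

end Aux

/-- For conjugate homeomorphisms `φ, φ̂` of a compact metric space, `μ` ergodic
for `φ`, `ν ≪ μ`, and `g⁻¹` nonsingular w.r.t. `μ`, the Cesàro averages of the two transported
measures stay asymptotically within `dP(μ, g_*μ)` of each other. -/
theorem statement3 {X : Type*} [MetricSpace X] [CompactSpace X]
    [MeasurableSpace X] [BorelSpace X]
    (φ φh g : X ≃ₜ X) (hconj : ∀ x, g (φ x) = φh (g x))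
    -- `dP` is a metric on `P(X)` metrizing the weak topology:
    (dP : ProbabilityMeasure X → ProbabilityMeasure X → ℝ)
    (hdP_symm : ∀ a b, dP a b = dP b a)
    (hdP_tri : ∀ a b c, dP a c ≤ dP a b + dP b c)
    (hdP_eq : ∀ a b, dP a b = 0 ↔ a = b)
    (hdP_top : ∀ s : Set (ProbabilityMeasure X),
      IsOpen s ↔ ∀ a ∈ s, ∃ ε > (0 : ℝ), ∀ b, dP a b < ε → b ∈ s)
    (μ ν : ProbabilityMeasure X)
    (herg : IsErgodicM ⇑φ (μ : Measure X))
    (habs : (ν : Measure X) ≪ (μ : Measure X))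
    (hns : (μ : Measure X).map ⇑g.symm ≪ (μ : Measure X)) :
    Filter.limsup
      (fun T : ℕ => dP
        (avgPM (fun t => pushPM (⇑φ)^[t] (φ.continuous.measurable.iterate t) ν) T)
        (avgPM (fun t => pushPM (⇑φh)^[t] (φh.continuous.measurable.iterate t) ν) T))
      atTop
      ≤ dP μ (pushPM ⇑g g.continuous.measurable μ) := by
  have hφm : Measurable ⇑φ := φ.continuous.measurable
  have hgm : Measurable ⇑g := g.continuous.measurable
  have hgsm : Measurable ⇑g.symm := g.symm.continuous.measurable
  have hφMP : MeasurePreserving ⇑φ (μ : Measure X) (μ : Measure X) := ⟨hφm, herg.1⟩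
  have hergE : Ergodic ⇑φ (μ : Measure X) := herg.ergodic hφm
  -- conjugacy for iterates
  have hconj_it : ∀ (t : ℕ) (x : X), (⇑φh)^[t] (g x) = g ((⇑φ)^[t] x) := by
    intro t
    induction t with
    | zero => intro x; rfl
    | succ t ih =>
      intro x
      rw [Function.iterate_succ_apply, Function.iterate_succ_apply, ← hconj, ih]
  have hconj_it' : ∀ (t : ℕ) (x : X), (⇑φh)^[t] x = g ((⇑φ)^[t] (g.symm x)) := by
    intro t x
    conv_lhs => rw [← g.apply_symm_apply x]
    rw [hconj_it]
  -- the transported measure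
  set ν' : Measure X := (ν : Measure X).map ⇑g.symm with hν'
  have hν'P : IsProbabilityMeasure ν' := Measure.isProbabilityMeasure_map hgsm.aemeasurable
  have hν'abs : ν' ≪ (μ : Measure X) := (habs.map hgsm).trans hns
  set A : ℕ → ProbabilityMeasure X :=
    fun T => avgPM (fun t => pushPM (⇑φ)^[t] (φ.continuous.measurable.iterate t) ν) T with hA
  set Ah : ℕ → ProbabilityMeasure X :=
    fun T => avgPM (fun t => pushPM (⇑φh)^[t] (φh.continuous.measurable.iterate t) ν) T with hAh
  set gp : ProbabilityMeasure X := pushPM ⇑g g.continuous.measurable μ with hgp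
  -- convergence of the first Cesàro averages to μ
  have claim1 : Tendsto A atTop (𝓝 μ) := by
    rw [ProbabilityMeasure.tendsto_iff_forall_integral_tendsto]
    intro f
    have base := (lemA ⇑φ (μ : Measure X) (ν : Measure X) hφMP hergE habs f).comp
      (tendsto_add_atTop_nat 1)
    refine base.congr fun T => ?_
    have hInt : ∀ t : ℕ, Integrable (⇑f)
        ((pushPM (⇑φ)^[t] (φ.continuous.measurable.iterate t) ν : ProbabilityMeasure X)
          : Measure X) := fun t => f.integrable _
    rw [hA]
    simp only
    rw [integral_avgPM T (⇑f) hInt]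
    simp only [Function.comp_apply]
    congr 1
    · push_cast; ring
    · refine Finset.sum_congr rfl fun t _ => ?_
      show _ = (∫ x, f x ∂((ν : Measure X).map (⇑φ)^[t]))
      rw [integral_map (hφm.iterate t).aemeasurable f.continuous.measurable.aestronglyMeasurable]
  -- convergence of the second Cesàro averages to g_*μ
  have claim2 : Tendsto Ah atTop (𝓝 gp) := by
    rw [ProbabilityMeasure.tendsto_iff_forall_integral_tendsto]
    intro f
    have base := (lemA ⇑φ (μ : Measure X) ν' hφMP hergE hν'abs
      (f.compContinuous (g : C(X, X)))).comp (tendsto_add_atTop_nat 1)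
    have hgoal : (∫ x, (f.compContinuous (g : C(X, X))) x ∂(μ : Measure X))
        = ∫ x, f x ∂(gp : Measure X) := by
      show (∫ x, f (g x) ∂(μ : Measure X)) = ∫ x, f x ∂((μ : Measure X).map ⇑g)
      rw [integral_map hgm.aemeasurable f.continuous.measurable.aestronglyMeasurable]
    rw [hgoal] at base
    refine base.congr fun T => ?_
    have hInt : ∀ t : ℕ, Integrable (⇑f)
        ((pushPM (⇑φh)^[t] (φh.continuous.measurable.iterate t) ν : ProbabilityMeasure X)
          : Measure X) := fun t => f.integrable _
    rw [hAh]
    simp only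
    rw [integral_avgPM T (⇑f) hInt]
    simp only [Function.comp_apply]
    congr 1
    · push_cast; ring
    · refine Finset.sum_congr rfl fun t _ => ?_
      have ht : ∫ x, (f.compContinuous (g : C(X, X))) ((⇑φ)^[t] x) ∂ν'
          = ∫ x, f ((⇑φh)^[t] x) ∂(ν : Measure X) := by
        rw [hν', integral_map hgsm.aemeasurable]
        · apply integral_congr_ae
          filter_upwards with x
          show f (g ((⇑φ)^[t] (g.symm x))) = f ((⇑φh)^[t] x)
          rw [hconj_it' t x]
        · exact (f.continuous.comp (g.continuous.comp
            ((φ.continuous.iterate t)))).measurable.aestronglyMeasurable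
      rw [ht]
      show _ = (∫ x, f x ∂((ν : Measure X).map (⇑φh)^[t]))
      rw [integral_map ((φh.continuous.measurable.iterate t)).aemeasurable
        f.continuous.measurable.aestronglyMeasurable]
  -- metric facts about dP
  have dP_nonneg : ∀ a b, 0 ≤ dP a b := by
    intro a b
    have h1 := hdP_tri a b a
    have h2 := hdP_symm a b
    have h3 := (hdP_eq a a).mpr rfl
    linarith
  have hdtend : ∀ (u : ℕ → ProbabilityMeasure X) (m : ProbabilityMeasure X),
      Tendsto u atTop (𝓝 m) → Tendsto (fun n => dP m (u n)) atTop (𝓝 0) := by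
    intro u m hu
    rw [Metric.tendsto_atTop]
    intro ε hε
    have hopen : IsOpen {b | dP m b < ε} := by
      rw [hdP_top]
      intro a ha
      refine ⟨ε - dP m a, by simpa using ha, fun b hb => ?_⟩
      have := hdP_tri m a b
      simp only [Set.mem_setOf_eq] at *
      linarith
    have hmem : m ∈ {b | dP m b < ε} := by
      simp only [Set.mem_setOf_eq, (hdP_eq m m).mpr rfl]
      exact hε
    have hev := hu.eventually (hopen.mem_nhds hmem)
    rw [eventually_atTop] at hev
    obtain ⟨N, hN⟩ := hev
    refine ⟨N, fun n hn => ?_⟩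
    have := hN n hn
    rw [Real.dist_eq, sub_zero, abs_of_nonneg (dP_nonneg _ _)]
    exact this
  have h1 := hdtend A μ claim1
  have h2 := hdtend Ah gp claim2
  set D : ℝ := dP μ gp with hD
  have he : Tendsto (fun T => dP μ (A T) + D + dP gp (Ah T)) atTop (𝓝 D) := by
    have := (h1.add (tendsto_const_nhds (x := D))).add h2
    simpa using this
  have hle : ∀ T, dP (A T) (Ah T) ≤ dP μ (A T) + D + dP gp (Ah T) := by
    intro T
    have t1 := hdP_tri (A T) μ (Ah T)
    have t2 := hdP_tri μ gp (Ah T)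
    have s1 := hdP_symm (A T) μ
    linarith
  calc limsup (fun T => dP (A T) (Ah T)) atTop
      ≤ limsup (fun T => dP μ (A T) + D + dP gp (Ah T)) atTop := by
        exact limsup_le_limsup (Eventually.of_forall hle)
          (isCoboundedUnder_le_of_eventually_le atTop
            (Eventually.of_forall fun T => dP_nonneg (A T) (Ah T)))
          he.isBoundedUnder_le
    _ = D := he.limsup_eq


end
end

section
/- Let (X,d) be a compact metric space and let φ, φ̂ : X → X be homeomorphisms that are topologically conjugate by a homeomorphism g : X → X, i.e. g ∘ φ = φ̂ ∘ g. Let μ be a mixing Borel probability measure for φ, and let ν be a Borel probability measure absolutely continuous with respect to μ. Suppose g⁻¹ is nonsingular with respect to μ, i.e. (g⁻¹)_*μ ≪ μ. Then limsup_{t→∞} d_P(φ^t_*ν, φ̂^t_*ν) ≤ d_P(μ, g_*μ). -/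
open MeasureTheory Filter Topology ENNReal

noncomputable section

/-- `μ` is an invariant mixing measure of `f`. -/
def IsMixingM {α : Type*} [MeasurableSpace α] (f : α → α) (μ : Measure α) : Prop :=
  μ.map f = μ ∧ ∀ A B : Set α, MeasurableSet A → MeasurableSet B →
    Tendsto (fun t : ℕ => μ (f^[t] ⁻¹' A ∩ B)) atTop (𝓝 (μ A * μ B))

/-- ε/3-type helper: if `T` is uniformly approximated by convergent sequences with
approximately the right limits, then `T` converges. -/
lemma tendsto_of_unif_approx {T : ℕ → ℝ} {L : ℝ}
    (h : ∀ ε : ℝ, 0 < ε → ∃ (T' : ℕ → ℝ) (L' : ℝ),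
      Tendsto T' atTop (𝓝 L') ∧ (∀ t, |T t - T' t| ≤ ε) ∧ |L - L'| ≤ ε) :
    Tendsto T atTop (𝓝 L) := by
  rw [Metric.tendsto_atTop]
  intro ε hε
  obtain ⟨T', L', hT', hTT, hLL⟩ := h (ε / 4) (by linarith)
  rw [Metric.tendsto_atTop] at hT'
  obtain ⟨N, hN⟩ := hT' (ε / 4) (by linarith)
  refine ⟨N, fun t ht => ?_⟩
  have h1 := hN t ht
  rw [Real.dist_eq] at h1 ⊢
  have h2 : |T t - L| ≤ |T t - T' t| + |T' t - L'| + |L' - L| := by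
    have := abs_sub_le (T t) (T' t) L
    have := abs_sub_le (T' t) L' L
    linarith
  have h3 : |L' - L| ≤ ε / 4 := by rw [abs_sub_comm]; exact hLL
  have h4 := hTT t
  linarith

section Mixing

variable {X : Type*} [MeasurableSpace X] {φ : X → X} {μ : Measure X}

lemma mix_real [IsProbabilityMeasure μ] (hmix : IsMixingM φ μ) {A B : Set X}
    (hA : MeasurableSet A) (hB : MeasurableSet B) :
    Tendsto (fun t : ℕ => (μ (φ^[t] ⁻¹' A ∩ B)).toReal) atTop
      (𝓝 ((μ A).toReal * (μ B).toReal)) := by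
  have := (ENNReal.tendsto_toReal
    (ENNReal.mul_ne_top (measure_ne_top μ A) (measure_ne_top μ B))).comp (hmix.2 A B hA hB)
  simpa [ENNReal.toReal_mul, Function.comp_def] using this

/-- basic L¹ estimate for differences of integrals. -/
lemma abs_integral_sub_le {f g : X → ℝ} (hf : Integrable f μ) (hg : Integrable g μ) :
    |∫ x, f x ∂μ - ∫ x, g x ∂μ| ≤ ∫ x, |f x - g x| ∂μ := by
  rw [← integral_sub hf hg]
  simpa [Real.norm_eq_abs] using norm_integral_le_integral_norm (fun x => f x - g x) (μ := μ)

/-- Key estimate: set-integrals of compositions with a measure-preserving map differ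
by at most the L¹ distance. -/
lemma setIntegral_comp_diff_le (hφ : Measurable φ) (hinv : μ.map φ = μ)
    [IsProbabilityMeasure μ] {f g : X → ℝ} (hf : Integrable f μ) (hg : Integrable g μ)
    (B : Set X) (t : ℕ) :
    |∫ x in B, f (φ^[t] x) ∂μ - ∫ x in B, g (φ^[t] x) ∂μ| ≤ ∫ x, |f x - g x| ∂μ := by
  have hmp : MeasurePreserving φ^[t] μ μ := (⟨hφ, hinv⟩ : MeasurePreserving φ μ μ).iterate t
  have hfc : Integrable (fun x => f (φ^[t] x)) μ :=
    (hmp.integrable_comp hf.aestronglyMeasurable).mpr hf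
  have hgc : Integrable (fun x => g (φ^[t] x)) μ :=
    (hmp.integrable_comp hg.aestronglyMeasurable).mpr hg
  calc |∫ x in B, f (φ^[t] x) ∂μ - ∫ x in B, g (φ^[t] x) ∂μ|
      = |∫ x in B, (f (φ^[t] x) - g (φ^[t] x)) ∂μ| := by
        rw [integral_sub hfc.restrict hgc.restrict]
    _ ≤ ∫ x in B, |f (φ^[t] x) - g (φ^[t] x)| ∂μ := by
        simpa [Real.norm_eq_abs] using
          norm_integral_le_integral_norm (fun x => f (φ^[t] x) - g (φ^[t] x)) (μ := μ.restrict B)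
    _ ≤ ∫ x, |f (φ^[t] x) - g (φ^[t] x)| ∂μ :=
        setIntegral_le_integral (hfc.sub hgc).abs
          (Filter.Eventually.of_forall fun x => abs_nonneg _)
    _ = ∫ x, |f x - g x| ∂μ := by
        have hasm : AEStronglyMeasurable (fun x => |f x - g x|) (μ.map φ^[t]) := by
          rw [hmp.map_eq]; exact (hf.sub hg).abs.aestronglyMeasurable
        rw [← integral_map (hφ.iterate t).aemeasurable hasm, hmp.map_eq]

set_option synthInstance.maxHeartbeats 1000000 in
/-- Mixing against a set: `∫_B h ∘ φ^t dμ → (∫ h dμ) μ(B)` for integrable `h`. -/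
lemma corr_set (hφ : Measurable φ) [IsProbabilityMeasure μ] (hmix : IsMixingM φ μ)
    {B : Set X} (hB : MeasurableSet B) :
    ∀ ⦃h : X → ℝ⦄, Integrable h μ →
      Tendsto (fun t : ℕ => ∫ x in B, h (φ^[t] x) ∂μ) atTop
        (𝓝 ((∫ x, h x ∂μ) * (μ B).toReal)) := by
  have hmp : ∀ t : ℕ, MeasurePreserving φ^[t] μ μ :=
    fun t => (⟨hφ, hmix.1⟩ : MeasurePreserving φ μ μ).iterate t
  refine Integrable.induction (P := fun h : X → ℝ =>
    Tendsto (fun t : ℕ => ∫ x in B, h (φ^[t] x) ∂μ) atTop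
      (𝓝 ((∫ x, h x ∂μ) * (μ B).toReal))) ?_ ?_ ?_ ?_
  · -- indicator case
    intro c A hA _
    have key : ∀ t : ℕ, ∫ x in B, (A.indicator fun _ => c) (φ^[t] x) ∂μ
        = (μ (φ^[t] ⁻¹' A ∩ B)).toReal * c := by
      intro t
      have heq : (fun x => (A.indicator fun _ => c) (φ^[t] x))
          = (φ^[t] ⁻¹' A).indicator fun _ => c := by
        ext x; by_cases hx : φ^[t] x ∈ A <;> simp [Set.indicator, hx]
      rw [heq, setIntegral_indicator ((hφ.iterate t) hA), setIntegral_const, smul_eq_mul,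
        Set.inter_comm]
      rfl
    simp only [key]
    rw [integral_indicator_const c hA, smul_eq_mul, mul_right_comm]
    exact (mix_real hmix hA hB).mul_const c
  · -- additivity
    intro f g _ hf hg Pf Pg
    have key : ∀ t : ℕ, ∫ x in B, (f + g) (φ^[t] x) ∂μ
        = ∫ x in B, f (φ^[t] x) ∂μ + ∫ x in B, g (φ^[t] x) ∂μ := by
      intro t
      have hfc : Integrable (fun x => f (φ^[t] x)) (μ.restrict B) :=
        (((hmp t).integrable_comp hf.aestronglyMeasurable).mpr hf).restrict
      have hgc : Integrable (fun x => g (φ^[t] x)) (μ.restrict B) :=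
        (((hmp t).integrable_comp hg.aestronglyMeasurable).mpr hg).restrict
      simp only [Pi.add_apply]
      exact integral_add hfc hgc
    have h2 : ∫ x, (f + g) x ∂μ = ∫ x, f x ∂μ + ∫ x, g x ∂μ := by
      simp only [Pi.add_apply]
      exact integral_add hf hg
    simp only [key, h2, add_mul]
    exact Pf.add Pg
  · -- closedness in L¹
    refine IsSeqClosed.isClosed ?_
    intro seq h hseq hlim
    simp only [Set.mem_setOf_eq] at hseq ⊢
    apply tendsto_of_unif_approx
    intro ε hε
    obtain ⟨N, hN⟩ := (Metric.tendsto_atTop.mp hlim) ε hε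
    have hdist : dist (seq N) h < ε := hN N le_rfl
    have hd : ∫ x, |(h : X → ℝ) x - (seq N : X → ℝ) x| ∂μ < ε := by
      rw [L1.dist_eq_integral_dist] at hdist
      calc ∫ x, |(h : X → ℝ) x - (seq N : X → ℝ) x| ∂μ
          = ∫ a, dist ((seq N : X → ℝ) a) ((h : X → ℝ) a) ∂μ :=
            integral_congr_ae (Filter.Eventually.of_forall fun x => by
              simp only [Real.dist_eq, abs_sub_comm])
        _ < ε := hdist
    refine ⟨fun t => ∫ x in B, (seq N : X → ℝ) (φ^[t] x) ∂μ,
      (∫ x, (seq N : X → ℝ) x ∂μ) * (μ B).toReal, hseq N, fun t => ?_, ?_⟩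
    · exact le_of_lt (lt_of_le_of_lt
        (setIntegral_comp_diff_le hφ hmix.1 (L1.integrable_coeFn h)
          (L1.integrable_coeFn (seq N)) B t) hd)
    · have h1 : |∫ x, (h : X → ℝ) x ∂μ - ∫ x, (seq N : X → ℝ) x ∂μ|
          ≤ ∫ x, |(h : X → ℝ) x - (seq N : X → ℝ) x| ∂μ :=
        abs_integral_sub_le (L1.integrable_coeFn h) (L1.integrable_coeFn (seq N))
      have hm1 : (μ B).toReal ≤ 1 := by
        simpa using ENNReal.toReal_mono one_ne_top (prob_le_one (μ := μ) (s := B))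
      have hm0 : (0 : ℝ) ≤ (μ B).toReal := ENNReal.toReal_nonneg
      calc |(∫ x, (h : X → ℝ) x ∂μ) * (μ B).toReal
            - (∫ x, (seq N : X → ℝ) x ∂μ) * (μ B).toReal|
          = |∫ x, (h : X → ℝ) x ∂μ - ∫ x, (seq N : X → ℝ) x ∂μ| * (μ B).toReal := by
            rw [← sub_mul, abs_mul, abs_of_nonneg hm0]
        _ ≤ |∫ x, (h : X → ℝ) x ∂μ - ∫ x, (seq N : X → ℝ) x ∂μ| * 1 := by
            exact mul_le_mul_of_nonneg_left hm1 (abs_nonneg _)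
        _ ≤ ε := by rw [mul_one]; exact le_of_lt (lt_of_le_of_lt h1 hd)
  · -- ae congruence
    intro f g hfg hf Pf
    have h1 : ∀ t : ℕ, ∫ x in B, f (φ^[t] x) ∂μ = ∫ x in B, g (φ^[t] x) ∂μ := by
      intro t
      exact integral_congr_ae (ae_restrict_of_ae ((hmp t).quasiMeasurePreserving.ae_eq_comp hfg))
    have h2 : ∫ x, f x ∂μ = ∫ x, g x ∂μ := integral_congr_ae hfg
    rw [← h2]
    exact Pf.congr h1

set_option synthInstance.maxHeartbeats 1000000 in
/-- Decay of correlations: for `h` bounded measurable and `f` integrable,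
`∫ (h ∘ φ^t) f dμ → (∫ h)(∫ f)`. -/
lemma corr (hφ : Measurable φ) [IsProbabilityMeasure μ] (hmix : IsMixingM φ μ)
    {h : X → ℝ} (hhm : Measurable h) {C : ℝ} (hC : ∀ x, |h x| ≤ C) :
    ∀ ⦃f : X → ℝ⦄, Integrable f μ →
      Tendsto (fun t : ℕ => ∫ x, h (φ^[t] x) * f x ∂μ) atTop
        (𝓝 ((∫ x, h x ∂μ) * (∫ x, f x ∂μ))) := by
  have hne : Nonempty X := by
    by_contra hc
    rw [not_nonempty_iff] at hc
    have h1 : μ Set.univ = 1 := measure_univ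
    rw [Set.univ_eq_empty_iff.mpr hc, measure_empty] at h1
    exact zero_ne_one h1
  have hC0 : 0 ≤ C := le_trans (abs_nonneg _) (hC (Classical.choice hne))
  have hmp : ∀ t : ℕ, MeasurePreserving φ^[t] μ μ :=
    fun t => (⟨hφ, hmix.1⟩ : MeasurePreserving φ μ μ).iterate t
  have hh : Integrable h μ := by
    refine ⟨hhm.aestronglyMeasurable, ?_⟩
    refine HasFiniteIntegral.mono' (g := fun _ => C)
      (hasFiniteIntegral_const C) ?_
    exact Filter.Eventually.of_forall fun x => by simpa [Real.norm_eq_abs] using hC x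
  -- integrability of products
  have hprod : ∀ (t : ℕ) (f : X → ℝ), Integrable f μ →
      Integrable (fun x => h (φ^[t] x) * f x) μ := by
    intro t f hf
    exact hf.bdd_mul ((hhm.comp (hφ.iterate t)).aestronglyMeasurable)
      (Filter.Eventually.of_forall fun x => by simpa [Real.norm_eq_abs] using hC (φ^[t] x))
  -- key estimate
  have hest : ∀ (t : ℕ) (f g : X → ℝ), Integrable f μ → Integrable g μ →
      |∫ x, h (φ^[t] x) * f x ∂μ - ∫ x, h (φ^[t] x) * g x ∂μ|
        ≤ C * ∫ x, |f x - g x| ∂μ := by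
    intro t f g hf hg
    calc |∫ x, h (φ^[t] x) * f x ∂μ - ∫ x, h (φ^[t] x) * g x ∂μ|
        = |∫ x, h (φ^[t] x) * (f x - g x) ∂μ| := by
          rw [← integral_sub (hprod t f hf) (hprod t g hg)]
          congr 1
          exact integral_congr_ae (Filter.Eventually.of_forall fun x => by ring)
      _ ≤ ∫ x, |h (φ^[t] x)| * |f x - g x| ∂μ := by
          simpa [Real.norm_eq_abs] using
            norm_integral_le_integral_norm (fun x => h (φ^[t] x) * (f x - g x)) (μ := μ)
      _ ≤ ∫ x, C * |f x - g x| ∂μ := by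
          refine integral_mono ?_ ((hf.sub hg).abs.const_mul C) ?_
          · exact (hprod t _ (hf.sub hg)).abs.congr
              (Filter.Eventually.of_forall fun x => abs_mul _ _)
          · intro x
            exact mul_le_mul_of_nonneg_right (hC _) (abs_nonneg _)
      _ = C * ∫ x, |f x - g x| ∂μ := integral_const_mul C _
  refine Integrable.induction (P := fun f : X → ℝ =>
    Tendsto (fun t : ℕ => ∫ x, h (φ^[t] x) * f x ∂μ) atTop
      (𝓝 ((∫ x, h x ∂μ) * (∫ x, f x ∂μ)))) ?_ ?_ ?_ ?_
  · -- indicator case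
    intro c s hs _
    have key : ∀ t : ℕ, ∫ x, h (φ^[t] x) * (s.indicator fun _ => c) x ∂μ
        = (∫ x in s, h (φ^[t] x) ∂μ) * c := by
      intro t
      have heq : (fun x => h (φ^[t] x) * (s.indicator fun _ => c) x)
          = s.indicator (fun x => h (φ^[t] x) * c) := by
        ext x; by_cases hx : x ∈ s <;> simp [Set.indicator, hx]
      rw [heq, integral_indicator hs, integral_mul_const]
    simp only [key]
    rw [integral_indicator_const c hs, smul_eq_mul, ← mul_assoc]
    exact (corr_set hφ hmix hs hh).mul_const c
  · -- additivity
    intro f g _ hf hg Pf Pg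
    have key : ∀ t : ℕ, ∫ x, h (φ^[t] x) * (f + g) x ∂μ
        = ∫ x, h (φ^[t] x) * f x ∂μ + ∫ x, h (φ^[t] x) * g x ∂μ := by
      intro t
      rw [← integral_add (hprod t f hf) (hprod t g hg)]
      exact integral_congr_ae (Filter.Eventually.of_forall fun x => by simp [mul_add])
    have h2 : ∫ x, (f + g) x ∂μ = ∫ x, f x ∂μ + ∫ x, g x ∂μ := by
      simp only [Pi.add_apply]
      exact integral_add hf hg
    simp only [key, h2, mul_add]
    exact Pf.add Pg
  · -- closedness in L¹
    refine IsSeqClosed.isClosed ?_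
    intro seq f hseq hlim
    simp only [Set.mem_setOf_eq] at hseq ⊢
    apply tendsto_of_unif_approx
    intro ε hε
    have hεC : 0 < ε / (C + 1) := div_pos hε (by linarith)
    obtain ⟨N, hN⟩ := (Metric.tendsto_atTop.mp hlim) (ε / (C + 1)) hεC
    have hdist : dist (seq N) f < ε / (C + 1) := hN N le_rfl
    have hd : ∫ x, |(f : X → ℝ) x - (seq N : X → ℝ) x| ∂μ < ε / (C + 1) := by
      rw [L1.dist_eq_integral_dist] at hdist
      calc ∫ x, |(f : X → ℝ) x - (seq N : X → ℝ) x| ∂μ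
          = ∫ a, dist ((seq N : X → ℝ) a) ((f : X → ℝ) a) ∂μ :=
            integral_congr_ae (Filter.Eventually.of_forall fun x => by
              simp only [Real.dist_eq, abs_sub_comm])
        _ < ε / (C + 1) := hdist
    have hd' : C * ∫ x, |(f : X → ℝ) x - (seq N : X → ℝ) x| ∂μ ≤ ε := by
      have hnn : 0 ≤ ∫ x, |(f : X → ℝ) x - (seq N : X → ℝ) x| ∂μ :=
        integral_nonneg fun x => abs_nonneg _
      calc C * ∫ x, |(f : X → ℝ) x - (seq N : X → ℝ) x| ∂μ
          ≤ (C + 1) * (ε / (C + 1)) := by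
            apply mul_le_mul (by linarith) (le_of_lt hd) hnn (by linarith)
        _ = ε := by field_simp
    refine ⟨fun t => ∫ x, h (φ^[t] x) * (seq N : X → ℝ) x ∂μ,
      (∫ x, h x ∂μ) * (∫ x, (seq N : X → ℝ) x ∂μ), hseq N, fun t => ?_, ?_⟩
    · exact le_trans (hest t _ _ (L1.integrable_coeFn f) (L1.integrable_coeFn (seq N))) hd'
    · have h1 : |∫ x, (f : X → ℝ) x ∂μ - ∫ x, (seq N : X → ℝ) x ∂μ|
          ≤ ∫ x, |(f : X → ℝ) x - (seq N : X → ℝ) x| ∂μ :=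
        abs_integral_sub_le (L1.integrable_coeFn f) (L1.integrable_coeFn (seq N))
      have hInth : |∫ x, h x ∂μ| ≤ C := by
        calc |∫ x, h x ∂μ| ≤ ∫ x, |h x| ∂μ := by
              simpa [Real.norm_eq_abs] using norm_integral_le_integral_norm h (μ := μ)
          _ ≤ ∫ _, C ∂μ := integral_mono hh.abs (integrable_const C) hC
          _ = C := by simp
      calc |(∫ x, h x ∂μ) * (∫ x, (f : X → ℝ) x ∂μ)
            - (∫ x, h x ∂μ) * (∫ x, (seq N : X → ℝ) x ∂μ)|
          = |∫ x, h x ∂μ| * |∫ x, (f : X → ℝ) x ∂μ - ∫ x, (seq N : X → ℝ) x ∂μ| := by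
            rw [← mul_sub, abs_mul]
        _ ≤ C * ∫ x, |(f : X → ℝ) x - (seq N : X → ℝ) x| ∂μ := by
            apply mul_le_mul hInth h1 (abs_nonneg _) hC0
        _ ≤ ε := hd'
  · -- ae congruence
    intro f g hfg hf Pf
    have h1 : ∀ t : ℕ, ∫ x, h (φ^[t] x) * f x ∂μ = ∫ x, h (φ^[t] x) * g x ∂μ := by
      intro t
      exact integral_congr_ae (hfg.mono fun x hx => by simp only [hx])
    have h2 : ∫ x, f x ∂μ = ∫ x, g x ∂μ := integral_congr_ae hfg
    rw [← h2]
    exact Pf.congr h1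

end Mixing

/-- For `ρ ≪ μ` with `μ` mixing, the pushforwards `φ^t_* ρ` converge weakly to `μ`. -/
lemma pushPM_iterate_tendsto {X : Type*} [MetricSpace X] [MeasurableSpace X] [BorelSpace X]
    {φ : X → X} (hφ : Measurable φ) {μ ρ : ProbabilityMeasure X}
    (hmix : IsMixingM φ (μ : Measure X)) (habs : (ρ : Measure X) ≪ (μ : Measure X)) :
    Tendsto (fun t : ℕ => pushPM (φ^[t]) (hφ.iterate t) ρ) atTop (𝓝 μ) := by
  rw [ProbabilityMeasure.tendsto_iff_forall_integral_tendsto]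
  intro f
  set d : X → ℝ := fun x => ((ρ : Measure X).rnDeriv (μ : Measure X) x).toReal with hd_def
  have hd : Integrable d (μ : Measure X) := Measure.integrable_toReal_rnDeriv
  have hint : ∀ g : X → ℝ, ∫ x, d x * g x ∂(μ : Measure X) = ∫ x, g x ∂(ρ : Measure X) := by
    intro g
    simpa [smul_eq_mul] using integral_rnDeriv_smul habs (f := g)
  have hone : ∫ x, d x ∂(μ : Measure X) = 1 := by
    have := hint fun _ => 1
    simpa using this
  have heq : ∀ t : ℕ, ∫ x, f x ∂((pushPM (φ^[t]) (hφ.iterate t) ρ : Measure X))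
      = ∫ x, f (φ^[t] x) * d x ∂(μ : Measure X) := by
    intro t
    have h1 : (pushPM (φ^[t]) (hφ.iterate t) ρ : Measure X) = (ρ : Measure X).map (φ^[t]) := rfl
    rw [h1, integral_map (hφ.iterate t).aemeasurable f.continuous.measurable.aestronglyMeasurable]
    rw [← hint fun x => f (φ^[t] x)]
    exact integral_congr_ae (Filter.Eventually.of_forall fun x => mul_comm _ _)
  simp only [heq]
  have := corr hφ hmix f.continuous.measurable
    (C := ‖f‖) (fun x => by simpa [Real.norm_eq_abs] using f.norm_coe_le_norm x) hd
  rw [hone, mul_one] at this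
  exact this

/-- For conjugate homeomorphisms `φ, φ̂` of a compact metric space, `μ` mixing
for `φ`, `ν ≪ μ`, and `g⁻¹` nonsingular w.r.t. `μ`,
`limsup_{t→∞} d_P(φ^t_*ν, φ̂^t_*ν) ≤ d_P(μ, g_*μ)`. -/
theorem statement5 {X : Type*} [MetricSpace X] [CompactSpace X]
    [MeasurableSpace X] [BorelSpace X]
    (φ φh g : X ≃ₜ X) (hconj : ∀ x, g (φ x) = φh (g x))
    -- `dP` is a metric on `P(X)` metrizing the weak topology:
    (dP : ProbabilityMeasure X → ProbabilityMeasure X → ℝ)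
    (hdP_symm : ∀ a b, dP a b = dP b a)
    (hdP_tri : ∀ a b c, dP a c ≤ dP a b + dP b c)
    (hdP_eq : ∀ a b, dP a b = 0 ↔ a = b)
    (hdP_top : ∀ s : Set (ProbabilityMeasure X),
      IsOpen s ↔ ∀ a ∈ s, ∃ ε > (0 : ℝ), ∀ b, dP a b < ε → b ∈ s)
    (μ ν : ProbabilityMeasure X)
    (hmix : IsMixingM ⇑φ (μ : Measure X))
    (habs : (ν : Measure X) ≪ (μ : Measure X))
    (hns : (μ : Measure X).map ⇑g.symm ≪ (μ : Measure X)) :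
    Filter.limsup
      (fun t : ℕ => dP
        (pushPM (⇑φ)^[t] (φ.continuous.measurable.iterate t) ν)
        (pushPM (⇑φh)^[t] (φh.continuous.measurable.iterate t) ν))
      atTop
      ≤ dP μ (pushPM ⇑g g.continuous.measurable μ) := by
  set A : ℕ → ProbabilityMeasure X :=
    fun t => pushPM (⇑φ)^[t] (φ.continuous.measurable.iterate t) ν with hA_def
  set B : ℕ → ProbabilityMeasure X :=
    fun t => pushPM (⇑φh)^[t] (φh.continuous.measurable.iterate t) ν with hB_def
  set gμ : ProbabilityMeasure X := pushPM ⇑g g.continuous.measurable μ with hgμ_def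
  -- convergence of A to μ
  have h1 : Tendsto A atTop (𝓝 μ) := pushPM_iterate_tendsto φ.continuous.measurable hmix habs
  -- the conjugated trajectory
  set ρ₂ : ProbabilityMeasure X := pushPM ⇑g.symm g.symm.continuous.measurable ν with hρ₂_def
  have habs₂ : (ρ₂ : Measure X) ≪ (μ : Measure X) :=
    (habs.map g.symm.continuous.measurable).trans hns
  have h2' : Tendsto (fun t : ℕ => pushPM ((⇑φ)^[t]) (φ.continuous.measurable.iterate t) ρ₂)
      atTop (𝓝 μ) := pushPM_iterate_tendsto φ.continuous.measurable hmix habs₂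
  have h2'' : Tendsto (fun t : ℕ => pushPM ⇑g g.continuous.measurable
      (pushPM ((⇑φ)^[t]) (φ.continuous.measurable.iterate t) ρ₂)) atTop (𝓝 gμ) := by
    rw [ProbabilityMeasure.tendsto_iff_forall_integral_tendsto] at h2' ⊢
    intro f
    have key : ∀ σ : ProbabilityMeasure X,
        ∫ x, f x ∂((pushPM ⇑g g.continuous.measurable σ : Measure X))
        = ∫ x, (f.compContinuous ⟨⇑g, g.continuous⟩) x ∂(σ : Measure X) := by
      intro σ
      have h1' : (pushPM ⇑g g.continuous.measurable σ : Measure X)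
          = (σ : Measure X).map ⇑g := rfl
      rw [h1', integral_map g.continuous.measurable.aemeasurable
        f.continuous.measurable.aestronglyMeasurable]
      rfl
    simp only [hgμ_def, key]
    exact h2' (f.compContinuous ⟨⇑g, g.continuous⟩)
  -- conjugation identity on iterates
  have hconj_it : ∀ (t : ℕ) (x : X), g (φ^[t] x) = φh^[t] (g x) := by
    intro t
    induction t with
    | zero => intro x; simp
    | succ n ih =>
      intro x
      rw [Function.iterate_succ_apply', Function.iterate_succ_apply', hconj, ih]
  have hBB : ∀ t : ℕ, B t = pushPM ⇑g g.continuous.measurable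
      (pushPM ((⇑φ)^[t]) (φ.continuous.measurable.iterate t) ρ₂) := by
    intro t
    apply Subtype.ext
    show (ν : Measure X).map ((⇑φh)^[t])
      = (((ν : Measure X).map ⇑g.symm).map ((⇑φ)^[t])).map ⇑g
    rw [Measure.map_map (φ.continuous.measurable.iterate t) g.symm.continuous.measurable,
      Measure.map_map g.continuous.measurable
        ((φ.continuous.measurable.iterate t).comp g.symm.continuous.measurable)]
    congr 1
    funext x
    show (⇑φh)^[t] x = (⇑g ∘ (⇑φ)^[t] ∘ ⇑g.symm) x
    show (⇑φh)^[t] x = g (φ^[t] (g.symm x))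
    rw [hconj_it t (g.symm x), Homeomorph.apply_symm_apply]
  have h2 : Tendsto B atTop (𝓝 gμ) := by
    refine h2''.congr fun t => (hBB t).symm
  -- dP facts
  have dP_nonneg : ∀ a b, 0 ≤ dP a b := by
    intro a b
    have h0 : dP a a = 0 := (hdP_eq a a).mpr rfl
    have ht := hdP_tri a b a
    rw [hdP_symm b a] at ht
    linarith [h0 ▸ ht]
  have hdPconv : ∀ (seq : ℕ → ProbabilityMeasure X) (L : ProbabilityMeasure X),
      Tendsto seq atTop (𝓝 L) → Tendsto (fun t => dP L (seq t)) atTop (𝓝 0) := by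
    intro seq L hL
    rw [NormedAddCommGroup.tendsto_nhds_zero]
    intro ε hε
    have hopen : IsOpen {b | dP L b < ε} := by
      rw [hdP_top]
      intro a ha
      refine ⟨ε - dP L a, by simpa using ha, fun b hb => ?_⟩
      have := hdP_tri L a b
      simp only [Set.mem_setOf_eq] at ha ⊢
      linarith
    have hmem : L ∈ {b | dP L b < ε} := by
      simp only [Set.mem_setOf_eq, (hdP_eq L L).mpr rfl]
      exact hε
    filter_upwards [hL (hopen.mem_nhds hmem)] with t ht
    rw [Real.norm_eq_abs, abs_of_nonneg (dP_nonneg _ _)]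
    exact ht
  have hA0 := hdPconv _ _ h1
  have hB0 := hdPconv _ _ h2
  have hub : ∀ t, dP (A t) (B t) ≤ dP μ (A t) + (dP μ gμ + dP gμ (B t)) := by
    intro t
    calc dP (A t) (B t) ≤ dP (A t) μ + dP μ (B t) := hdP_tri _ _ _
      _ ≤ dP (A t) μ + (dP μ gμ + dP gμ (B t)) := by linarith [hdP_tri μ gμ (B t)]
      _ = dP μ (A t) + (dP μ gμ + dP gμ (B t)) := by rw [hdP_symm (A t) μ]
  have hu : Tendsto (fun t => dP μ (A t) + (dP μ gμ + dP gμ (B t))) atTop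
      (𝓝 (0 + (dP μ gμ + 0))) := hA0.add (tendsto_const_nhds.add hB0)
  calc Filter.limsup (fun t : ℕ => dP (A t) (B t)) atTop
      ≤ Filter.limsup (fun t => dP μ (A t) + (dP μ gμ + dP gμ (B t))) atTop := by
        refine limsup_le_limsup (Filter.Eventually.of_forall hub) ?_ ?_
        · exact isCoboundedUnder_le_of_le atTop fun t => dP_nonneg _ _
        · exact hu.isBoundedUnder_le
    _ = dP μ gμ := by simpa using hu.limsup_eq

end
end

section
/- Let X be a smooth compact manifold with metric d and let φ, φ̂ ∈ Diff¹(X) be topologically conjugate by a homeomorphism g : X → X, i.e. g ∘ φ = φ̂ ∘ g. Fix a locally finite Borel reference measure ℓ on X. Let μ be an attracting measure for φ with respect to ℓ, with open neighbourhood U of its support, and let ν be a Borel probability measure absolutely continuous with respect to ℓ with ν(U ∩ g(U)) = 1. Suppose φ, g and g⁻¹ are nonsingular with respect to ℓ. Then limsup_{t→∞} d_P(φ^t_*ν, φ̂^t_*ν) ≤ d_P(μ, g_*μ). -/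
open MeasureTheory Filter Topology ENNReal

noncomputable section

/-- Support of a measure: points all of whose open neighbourhoods have positive measure. -/
def msupport {α : Type*} [TopologicalSpace α] [MeasurableSpace α] (m : Measure α) : Set α :=
  {x | ∀ u : Set α, IsOpen u → x ∈ u → m u ≠ 0}

lemma pushPM_eq_map {α β : Type*} [MeasurableSpace α] [MeasurableSpace β]
    (f : α → β) (hf : Measurable f) (ν : ProbabilityMeasure α) :
    pushPM f hf ν = ν.map hf.aemeasurable := Subtype.ext rfl

section aux
variable {X : Type*} [MeasurableSpace X] [TopologicalSpace X] [OpensMeasurableSpace X]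
  (dP : ProbabilityMeasure X → ProbabilityMeasure X → ℝ)
  (hdP_symm : ∀ a b, dP a b = dP b a)
  (hdP_tri : ∀ a b c, dP a c ≤ dP a b + dP b c)
  (hdP_eq : ∀ a b, dP a b = 0 ↔ a = b)
  (hdP_top : ∀ s : Set (ProbabilityMeasure X),
      IsOpen s ↔ ∀ a ∈ s, ∃ ε > (0 : ℝ), ∀ b, dP a b < ε → b ∈ s)

include hdP_symm hdP_tri hdP_eq in
lemma dP_nonneg (a b : ProbabilityMeasure X) : 0 ≤ dP a b := by
  have h1 : dP a a = 0 := (hdP_eq a a).2 rfl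
  have h2 := hdP_tri a b a
  have h3 := hdP_symm a b
  linarith

include hdP_symm hdP_tri hdP_eq hdP_top in
lemma tendsto_dP {a : ProbabilityMeasure X} {u : ℕ → ProbabilityMeasure X}
    (h : Tendsto u atTop (𝓝 a)) : Tendsto (fun t => dP a (u t)) atTop (𝓝 0) := by
  rw [Metric.tendsto_atTop]
  intro ε hε
  have hopen : IsOpen {b | dP a b < ε} := by
    rw [hdP_top]
    intro b hb
    have hb' : dP a b < ε := hb
    refine ⟨ε - dP a b, sub_pos.mpr hb', fun c hc => ?_⟩
    have := hdP_tri a b c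
    show dP a c < ε
    linarith
  have hmem : a ∈ {b | dP a b < ε} := by
    simpa [Set.mem_setOf_eq, (hdP_eq a a).2 rfl] using hε
  have := h.eventually (hopen.mem_nhds hmem)
  rw [eventually_atTop] at this
  obtain ⟨N, hN⟩ := this
  refine ⟨N, fun n hn => ?_⟩
  have h1 := hN n hn
  have h2 := dP_nonneg dP hdP_symm hdP_tri hdP_eq a (u n)
  change dP a (u n) < ε at h1
  rw [Real.dist_eq, sub_zero, abs_of_nonneg h2]
  exact h1

end aux


/-- For topologically conjugate `C¹` diffeomorphisms `φ, φ̂` of a smooth compact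
manifold, `μ` an attracting measure for `φ` (w.r.t. the locally finite reference measure `ℓ`, with
open neighbourhood `U` of its support), and `ν ≪ ℓ` with `ν(U ∩ g(U)) = 1`,
`limsup_{t→∞} d_P(φ^t_*ν, φ̂^t_*ν) ≤ d_P(μ, g_*μ)`. -/
theorem statement6 {E : Type*} [NormedAddCommGroup E] [NormedSpace ℝ E]
    {H : Type*} [TopologicalSpace H] (I : ModelWithCorners ℝ E H)
    {X : Type*} [MetricSpace X] [CompactSpace X] [ChartedSpace H X]
    [IsManifold I (⊤ : ℕ∞) X] [MeasurableSpace X] [BorelSpace X]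
    -- `φ, φ̂ ∈ Diff¹(X)`, conjugate by the homeomorphism `g`:
    (φ φh g : X ≃ₜ X)
    (hφ : ContMDiff I I 1 ⇑φ) (hφinv : ContMDiff I I 1 ⇑φ.symm)
    (hφh : ContMDiff I I 1 ⇑φh) (hφhinv : ContMDiff I I 1 ⇑φh.symm)
    (hconj : ∀ x, g (φ x) = φh (g x))
    -- `dP` is a metric on `P(X)` metrizing the weak topology:
    (dP : ProbabilityMeasure X → ProbabilityMeasure X → ℝ)
    (hdP_symm : ∀ a b, dP a b = dP b a)
    (hdP_tri : ∀ a b c, dP a c ≤ dP a b + dP b c)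
    (hdP_eq : ∀ a b, dP a b = 0 ↔ a = b)
    (hdP_top : ∀ s : Set (ProbabilityMeasure X),
      IsOpen s ↔ ∀ a ∈ s, ∃ ε > (0 : ℝ), ∀ b, dP a b < ε → b ∈ s)
    -- locally finite Borel reference measure:
    (ℓ : Measure X) [IsLocallyFiniteMeasure ℓ]
    -- `μ` is an attracting measure for `φ`, with open neighbourhood `U` of its support:
    (μ : ProbabilityMeasure X) (U : Set X)
    (hUopen : IsOpen U) (hUsupp : msupport (μ : Measure X) ⊆ U)
    (hcompact : IsCompact (msupport (μ : Measure X)))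
    (hattr : ∀ ν' : ProbabilityMeasure X, (ν' : Measure X) ≪ ℓ → (ν' : Measure X) U = 1 →
      Tendsto (fun t : ℕ => pushPM (⇑φ)^[t] (φ.continuous.measurable.iterate t) ν')
        atTop (𝓝 μ))
    -- `ν ≪ ℓ` with `ν(U ∩ g(U)) = 1`:
    (ν : ProbabilityMeasure X)
    (hν : (ν : Measure X) ≪ ℓ) (hνU : (ν : Measure X) (U ∩ ⇑g '' U) = 1)
    -- `φ`, `g` and `g⁻¹` are nonsingular w.r.t. `ℓ`:
    (hnsφ : ℓ.map ⇑φ ≪ ℓ) (hnsg : ℓ.map ⇑g ≪ ℓ) (hnsginv : ℓ.map ⇑g.symm ≪ ℓ) :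
    Filter.limsup
      (fun t : ℕ => dP
        (pushPM (⇑φ)^[t] (φ.continuous.measurable.iterate t) ν)
        (pushPM (⇑φh)^[t] (φh.continuous.measurable.iterate t) ν))
      atTop
      ≤ dP μ (pushPM ⇑g g.continuous.measurable μ) := by
  -- conjugation for iterates
  have hconj_iter : ∀ t x, g ((⇑φ)^[t] x) = (⇑φh)^[t] (g x) := by
    intro t
    induction t with
    | zero => simp
    | succ n ih =>
      intro x
      rw [Function.iterate_succ_apply', Function.iterate_succ_apply', hconj, ih]
  set ν₂ : ProbabilityMeasure X := pushPM ⇑g.symm g.symm.continuous.measurable ν with hν₂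
  -- ν₂ ≪ ℓ
  have hν₂ac : (ν₂ : Measure X) ≪ ℓ := by
    have : (ν : Measure X).map ⇑g.symm ≪ ℓ.map ⇑g.symm :=
      hν.map g.symm.continuous.measurable
    exact this.trans hnsginv
  -- ν U = 1 and ν₂ U = 1
  have hνU1 : (ν : Measure X) U = 1 := by
    refine le_antisymm (le_trans (measure_mono (Set.subset_univ U)) (by simp)) ?_
    calc (1 : ℝ≥0∞) = (ν : Measure X) (U ∩ ⇑g '' U) := hνU.symm
    _ ≤ (ν : Measure X) U := measure_mono Set.inter_subset_left
  have hν₂U1 : (ν₂ : Measure X) U = 1 := by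
    have hmeq : (ν₂ : Measure X) U = (ν : Measure X) (⇑g.symm ⁻¹' U) :=
      Measure.map_apply g.symm.continuous.measurable hUopen.measurableSet
    have himg : ⇑g.symm ⁻¹' U = ⇑g '' U := by
      have := g.preimage_symm
      exact congrFun this U
    rw [hmeq, himg]
    refine le_antisymm (le_trans (measure_mono (Set.subset_univ _)) (by simp)) ?_
    calc (1 : ℝ≥0∞) = (ν : Measure X) (U ∩ ⇑g '' U) := hνU.symm
    _ ≤ (ν : Measure X) (⇑g '' U) := measure_mono Set.inter_subset_right
  -- attracting
  have hA : Tendsto (fun t : ℕ => pushPM (⇑φ)^[t] (φ.continuous.measurable.iterate t) ν)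
      atTop (𝓝 μ) := hattr ν hν hνU1
  have hB : Tendsto (fun t : ℕ => pushPM (⇑φ)^[t] (φ.continuous.measurable.iterate t) ν₂)
      atTop (𝓝 μ) := hattr ν₂ hν₂ac hν₂U1
  -- push by g
  have hC : Tendsto (fun t : ℕ =>
      pushPM ⇑g g.continuous.measurable
        (pushPM (⇑φ)^[t] (φ.continuous.measurable.iterate t) ν₂))
      atTop (𝓝 (pushPM ⇑g g.continuous.measurable μ)) := by
    simp only [pushPM_eq_map]
    exact ProbabilityMeasure.tendsto_map_of_tendsto_of_continuous _ _ hB g.continuous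
  -- identify pushforward
  have hkey : ∀ t : ℕ,
      pushPM (⇑φh)^[t] (φh.continuous.measurable.iterate t) ν
        = pushPM ⇑g g.continuous.measurable
            (pushPM (⇑φ)^[t] (φ.continuous.measurable.iterate t) ν₂) := by
    intro t
    apply Subtype.ext
    show (ν : Measure X).map (⇑φh)^[t]
        = (((ν : Measure X).map ⇑g.symm).map (⇑φ)^[t]).map ⇑g
    rw [Measure.map_map g.continuous.measurable (φ.continuous.measurable.iterate t),
        Measure.map_map ((g.continuous.measurable.comp
          (φ.continuous.measurable.iterate t))) g.symm.continuous.measurable]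
    congr 1
    funext x
    simp only [Function.comp_apply]
    rw [hconj_iter t (g.symm x), Homeomorph.apply_symm_apply]
  set A := fun t : ℕ => pushPM (⇑φ)^[t] (φ.continuous.measurable.iterate t) ν with hAdef
  set B := fun t : ℕ => pushPM (⇑φh)^[t] (φh.continuous.measurable.iterate t) ν with hBdef
  set gμ := pushPM ⇑g g.continuous.measurable μ with hgμ
  have hdA : Tendsto (fun t => dP μ (A t)) atTop (𝓝 0) :=
    tendsto_dP dP hdP_symm hdP_tri hdP_eq hdP_top hA
  have hdB : Tendsto (fun t => dP gμ (B t)) atTop (𝓝 0) := by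
    have : Tendsto B atTop (𝓝 gμ) := by
      have := hC
      simp only [← hkey] at this
      exact this
    exact tendsto_dP dP hdP_symm hdP_tri hdP_eq hdP_top this
  -- majorant
  set e := fun t : ℕ => dP μ (A t) + dP μ gμ + dP gμ (B t) with he
  have hle : ∀ t, dP (A t) (B t) ≤ e t := by
    intro t
    calc dP (A t) (B t) ≤ dP (A t) μ + dP μ (B t) := hdP_tri _ _ _
    _ ≤ dP (A t) μ + (dP μ gμ + dP gμ (B t)) := by
        have := hdP_tri μ gμ (B t); linarith
    _ = e t := by rw [hdP_symm (A t) μ]; ring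
  have hetend : Tendsto e atTop (𝓝 (dP μ gμ)) := by
    have : Tendsto e atTop (𝓝 (0 + dP μ gμ + 0)) :=
      (hdA.add tendsto_const_nhds).add hdB
    simpa using this
  have hlimsup_e : Filter.limsup e atTop = dP μ gμ := hetend.limsup_eq
  calc Filter.limsup (fun t => dP (A t) (B t)) atTop
      ≤ Filter.limsup e atTop := by
        exact Filter.limsup_le_limsup (Eventually.of_forall hle)
          (isCoboundedUnder_le_of_le atTop
            (fun t => dP_nonneg dP hdP_symm hdP_tri hdP_eq (A t) (B t)))
          hetend.isBoundedUnder_le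
  _ = dP μ gμ := hlimsup_e

end
end

section
/- Let X̃ be a smooth compact manifold with metric d and let Φ, Φ̂ ∈ Diff¹(X̃) be topologically conjugate by a homeomorphism g : X̃ → X̃, i.e. g ∘ Φ = Φ̂ ∘ g. Let (U, d_U) be a separable metric space, let h, ĥ : X̃ → U be continuous, and let d_{P,U} be a metric metrizing the weak topology on P(U). Let ξ be a mixing Borel probability measure for Φ, let ξ₀ be a Borel probability measure absolutely continuous with respect to ξ, and suppose g⁻¹ is nonsingular with respect to ξ. Then limsup_{t→∞} d_{P,U}(h_*Φ^{t-1}_*ξ₀, ĥ_*Φ̂^{t-1}_*ξ₀) ≤ d_{P,U}(h_*ξ, ĥ_*ξ) + d_{P,U}(ĥ_*ξ, ĥ_*g_*ξ). -/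
open MeasureTheory Filter Topology ENNReal NNReal

noncomputable section

section Helpers

variable {α : Type*} [MeasurableSpace α]


lemma mapIter {T : α → α} (hT : Measurable T) {μ : Measure α} (hinv : μ.map T = μ) :
    ∀ t : ℕ, μ.map (T^[t]) = μ := by
  intro t
  induction t with
  | zero => simp [Measure.map_id]
  | succ n ih =>
    rw [Function.iterate_succ, ← Measure.map_map (hT.iterate n) hT, hinv, ih]

lemma lint_iter_inv {T : α → α} (hT : Measurable T) {μ : Measure α} (hinv : μ.map T = μ)
    {f : α → ℝ≥0∞} (hf : Measurable f) (t : ℕ) :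
    ∫⁻ x, f (T^[t] x) ∂μ = ∫⁻ x, f x ∂μ := by
  conv_rhs => rw [← mapIter hT hinv t]
  rw [lintegral_map hf (hT.iterate t)]

/-- Simple-function approximation from below with small integral gap. -/
lemma approx_simple {μ : Measure α} {f : α → ℝ≥0∞} (hf : Measurable f)
    (hfin : ∫⁻ x, f x ∂μ ≠ ⊤) {ε : ℝ≥0∞} (hε : ε ≠ 0) :
    ∃ s : SimpleFunc α ℝ≥0, (∀ x, (s x : ℝ≥0∞) ≤ f x) ∧
      ∫⁻ x, f x ∂μ ≤ (∫⁻ x, (s x : ℝ≥0∞) ∂μ) + ε := by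
  have hsup : (⨆ n, ∫⁻ x, SimpleFunc.eapprox f n x ∂μ) = ∫⁻ x, f x ∂μ := by
    rw [← lintegral_iSup (fun n => (SimpleFunc.eapprox f n).measurable)
      (fun i j hij x => SimpleFunc.monotone_eapprox f hij x)]
    exact lintegral_congr fun x => SimpleFunc.iSup_eapprox_apply hf x
  have hle : ∀ n x, SimpleFunc.eapprox f n x ≤ f x := fun n x => by
    rw [← SimpleFunc.iSup_eapprox_apply hf x]; exact le_iSup (fun n => SimpleFunc.eapprox f n x) n
  obtain ⟨n, hn⟩ : ∃ n, ∫⁻ x, f x ∂μ ≤ ∫⁻ x, SimpleFunc.eapprox f n x ∂μ + ε := by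
    by_cases h0 : ∫⁻ x, f x ∂μ ≤ ε
    · exact ⟨0, h0.trans le_add_self⟩
    · push_neg at h0
      have hlt : ∫⁻ x, f x ∂μ - ε < ⨆ n, ∫⁻ x, SimpleFunc.eapprox f n x ∂μ := by
        rw [hsup]
        exact ENNReal.sub_lt_self hfin ((zero_le : (0:ℝ≥0∞) ≤ ε).trans_lt h0).ne' hε
      obtain ⟨n, hn⟩ := lt_iSup_iff.mp hlt
      exact ⟨n, by
        have := (ENNReal.sub_lt_iff_lt_right (by
          exact ne_top_of_le_ne_top hfin h0.le) h0.le).mp hn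
        exact this.le⟩
  refine ⟨(SimpleFunc.eapprox f n).map ENNReal.toNNReal, ?_, ?_⟩
  · intro x
    have := (SimpleFunc.eapprox_lt_top f n x).ne
    simp only [SimpleFunc.map_apply, ENNReal.coe_toNNReal this]
    exact hle n x
  · refine hn.trans (le_of_eq ?_)
    congr 1
    refine lintegral_congr fun x => ?_
    simp [SimpleFunc.map_apply, ENNReal.coe_toNNReal (SimpleFunc.eapprox_lt_top f n x).ne]

lemma stepB {T : α → α} (hT : Measurable T) {μ : Measure α}
    (hmix : ∀ A B : Set α, MeasurableSet A → MeasurableSet B →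
      Tendsto (fun t : ℕ => μ (T^[t] ⁻¹' A ∩ B)) atTop (𝓝 (μ A * μ B)))
    {B : Set α} (hB : MeasurableSet B) (s : SimpleFunc α ℝ≥0) :
    Tendsto (fun t : ℕ => ∫⁻ x in B, (s (T^[t] x) : ℝ≥0∞) ∂μ) atTop
      (𝓝 ((∫⁻ x, (s x : ℝ≥0∞) ∂μ) * μ B)) := by
  induction s using SimpleFunc.induction with
  | @const c A hA =>
    have hint : ∀ t : ℕ, ∫⁻ x in B, ((SimpleFunc.piecewise A hA (SimpleFunc.const α c)
        (SimpleFunc.const α 0)) (T^[t] x) : ℝ≥0∞) ∂μ = (c : ℝ≥0∞) * μ (T^[t] ⁻¹' A ∩ B) := by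
      intro t
      have hpt : ∀ x, ((SimpleFunc.piecewise A hA (SimpleFunc.const α c)
          (SimpleFunc.const α 0)) (T^[t] x) : ℝ≥0∞)
          = Set.indicator (T^[t] ⁻¹' A) (fun _ => (c : ℝ≥0∞)) x := by
        intro x
        by_cases hx : T^[t] x ∈ A <;>
          simp [SimpleFunc.piecewise_apply, hx, Set.indicator_of_mem, Set.indicator_of_notMem,
            Set.mem_preimage]
      simp_rw [hpt]
      rw [lintegral_indicator_const ((hT.iterate t) hA), Measure.restrict_apply ((hT.iterate t) hA)]
    have hintl : ∫⁻ x, ((SimpleFunc.piecewise A hA (SimpleFunc.const α c)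
        (SimpleFunc.const α 0)) x : ℝ≥0∞) ∂μ = (c : ℝ≥0∞) * μ A := by
      have hpt : ∀ y, ((SimpleFunc.piecewise A hA (SimpleFunc.const α c)
          (SimpleFunc.const α 0)) y : ℝ≥0∞) = Set.indicator A (fun _ => (c : ℝ≥0∞)) y := by
        intro y
        by_cases hy : y ∈ A <;> simp [SimpleFunc.piecewise_apply, hy]
      simp_rw [hpt]
      exact lintegral_indicator_const hA _
    simp_rw [hint, hintl, mul_assoc]
    exact ENNReal.Tendsto.const_mul (hmix A B hA hB) (Or.inr ENNReal.coe_ne_top)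
  | @add f g _ hf hg =>
    have hmf : ∀ t : ℕ, Measurable fun x => (f (T^[t] x) : ℝ≥0∞) :=
      fun t => (measurable_coe_nnreal_ennreal.comp f.measurable).comp (hT.iterate t)
    have key : ∀ t : ℕ, ∫⁻ x in B, (((f + g) (T^[t] x) : ℝ≥0) : ℝ≥0∞) ∂μ
        = ∫⁻ x in B, (f (T^[t] x) : ℝ≥0∞) ∂μ + ∫⁻ x in B, (g (T^[t] x) : ℝ≥0∞) ∂μ := by
      intro t
      have hpt : ∀ x, (((f + g) (T^[t] x) : ℝ≥0) : ℝ≥0∞)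
          = (f (T^[t] x) : ℝ≥0∞) + (g (T^[t] x) : ℝ≥0∞) := by intro x; simp
      simp_rw [hpt]
      exact lintegral_add_left (hmf t) _
    have keyl : ∫⁻ x, (((f + g) x : ℝ≥0) : ℝ≥0∞) ∂μ
        = ∫⁻ x, (f x : ℝ≥0∞) ∂μ + ∫⁻ x, (g x : ℝ≥0∞) ∂μ := by
      have hpt : ∀ x, (((f + g) x : ℝ≥0) : ℝ≥0∞) = (f x : ℝ≥0∞) + (g x : ℝ≥0∞) := by
        intro x; simp
      simp_rw [hpt]
      exact lintegral_add_left (measurable_coe_nnreal_ennreal.comp f.measurable) _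
    simp_rw [key, keyl, add_mul]
    exact hf.add hg

lemma stepC {T : α → α} (hT : Measurable T) {μ : Measure α}
    (hmix : ∀ A B : Set α, MeasurableSet A → MeasurableSet B →
      Tendsto (fun t : ℕ => μ (T^[t] ⁻¹' A ∩ B)) atTop (𝓝 (μ A * μ B)))
    (s u : SimpleFunc α ℝ≥0) :
    Tendsto (fun t : ℕ => ∫⁻ x, (s (T^[t] x) : ℝ≥0∞) * (u x : ℝ≥0∞) ∂μ) atTop
      (𝓝 ((∫⁻ x, (s x : ℝ≥0∞) ∂μ) * ∫⁻ x, (u x : ℝ≥0∞) ∂μ)) := by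
  induction u using SimpleFunc.induction with
  | @const c B hB =>
    have key : ∀ t : ℕ, ∫⁻ x, (s (T^[t] x) : ℝ≥0∞) *
        (((SimpleFunc.piecewise B hB (SimpleFunc.const α c) (SimpleFunc.const α 0)) x : ℝ≥0) : ℝ≥0∞) ∂μ
        = (c : ℝ≥0∞) * ∫⁻ x in B, (s (T^[t] x) : ℝ≥0∞) ∂μ := by
      intro t
      have hpt : ∀ x, (s (T^[t] x) : ℝ≥0∞) *
          (((SimpleFunc.piecewise B hB (SimpleFunc.const α c) (SimpleFunc.const α 0)) x : ℝ≥0) : ℝ≥0∞)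
          = Set.indicator B (fun x => (c : ℝ≥0∞) * (s (T^[t] x) : ℝ≥0∞)) x := by
        intro x
        by_cases hx : x ∈ B <;>
          simp [SimpleFunc.piecewise_apply, hx, mul_comm]
      simp_rw [hpt]
      rw [lintegral_indicator hB]
      exact lintegral_const_mul _ ((measurable_coe_nnreal_ennreal.comp s.measurable).comp (hT.iterate t))
    have keyl : ∫⁻ x, (((SimpleFunc.piecewise B hB (SimpleFunc.const α c)
        (SimpleFunc.const α 0)) x : ℝ≥0) : ℝ≥0∞) ∂μ = (c : ℝ≥0∞) * μ B := by
      have hpt : ∀ y, ((SimpleFunc.piecewise B hB (SimpleFunc.const α c)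
          (SimpleFunc.const α 0)) y : ℝ≥0∞) = Set.indicator B (fun _ => (c : ℝ≥0∞)) y := by
        intro y
        by_cases hy : y ∈ B <;> simp [SimpleFunc.piecewise_apply, hy]
      simp_rw [hpt]
      exact lintegral_indicator_const hB _
    simp_rw [key, keyl]
    have := ENNReal.Tendsto.const_mul (stepB hT hmix hB s) (Or.inr (ENNReal.coe_ne_top (r := c)))
    convert this using 2
    ring
  | @add f g _ hf hg =>
    have key : ∀ t : ℕ, ∫⁻ x, (s (T^[t] x) : ℝ≥0∞) * (((f + g) x : ℝ≥0) : ℝ≥0∞) ∂μ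
        = ∫⁻ x, (s (T^[t] x) : ℝ≥0∞) * (f x : ℝ≥0∞) ∂μ
          + ∫⁻ x, (s (T^[t] x) : ℝ≥0∞) * (g x : ℝ≥0∞) ∂μ := by
      intro t
      have hpt : ∀ x, (s (T^[t] x) : ℝ≥0∞) * (((f + g) x : ℝ≥0) : ℝ≥0∞)
          = (s (T^[t] x) : ℝ≥0∞) * (f x : ℝ≥0∞) + (s (T^[t] x) : ℝ≥0∞) * (g x : ℝ≥0∞) := by
        intro x; simp [mul_add]
      simp_rw [hpt]
      exact lintegral_add_left (((measurable_coe_nnreal_ennreal.comp s.measurable).comp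
        (hT.iterate t)).mul (measurable_coe_nnreal_ennreal.comp f.measurable)) _
    have keyl : ∫⁻ x, (((f + g) x : ℝ≥0) : ℝ≥0∞) ∂μ
        = ∫⁻ x, (f x : ℝ≥0∞) ∂μ + ∫⁻ x, (g x : ℝ≥0∞) ∂μ := by
      have hpt : ∀ x, (((f + g) x : ℝ≥0) : ℝ≥0∞) = (f x : ℝ≥0∞) + (g x : ℝ≥0∞) := by
        intro x; simp
      simp_rw [hpt]
      exact lintegral_add_left (measurable_coe_nnreal_ennreal.comp f.measurable) _
    simp_rw [key, keyl, mul_add]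
    exact hf.add hg

lemma exists_le_add {g : ℕ → ℝ≥0∞} {Lq : ℝ≥0∞} (hsup : (⨆ n, g n) = Lq) (hfin : Lq ≠ ⊤)
    {ε : ℝ≥0∞} (hε : ε ≠ 0) : ∃ n, Lq ≤ g n + ε := by
  by_cases h0 : Lq ≤ ε
  · exact ⟨0, h0.trans le_add_self⟩
  · push_neg at h0
    have hlt : Lq - ε < ⨆ n, g n := by
      rw [hsup]
      exact ENNReal.sub_lt_self hfin ((zero_le : (0:ℝ≥0∞) ≤ ε).trans_lt h0).ne' hε
    obtain ⟨n, hn⟩ := lt_iSup_iff.mp hlt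
    exact ⟨n, ((ENNReal.sub_lt_iff_lt_right (ne_top_of_le_ne_top hfin h0.le) h0.le).mp hn).le⟩

lemma mixKey {T : α → α} (hT : Measurable T) {μ : Measure α} [IsProbabilityMeasure μ]
    (hinv : μ.map T = μ)
    (hmix : ∀ A B : Set α, MeasurableSet A → MeasurableSet B →
      Tendsto (fun t : ℕ => μ (T^[t] ⁻¹' A ∩ B)) atTop (𝓝 (μ A * μ B)))
    {φ f : α → ℝ≥0∞} (hφ : Measurable φ) (hfm : Measurable f)
    {C : ℝ≥0} (hφC : ∀ x, φ x ≤ C) (hfin : ∫⁻ x, f x ∂μ ≠ ⊤) :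
    Tendsto (fun t : ℕ => ∫⁻ x, φ (T^[t] x) * f x ∂μ) atTop
      (𝓝 ((∫⁻ x, φ x ∂μ) * ∫⁻ x, f x ∂μ)) := by
  set a : ℕ → ℝ≥0∞ := fun t => ∫⁻ x, φ (T^[t] x) * f x ∂μ with ha
  set L : ℝ≥0∞ := (∫⁻ x, φ x ∂μ) * ∫⁻ x, f x ∂μ with hL
  have hφC' : ∫⁻ x, φ x ∂μ ≤ (C : ℝ≥0∞) := by
    calc ∫⁻ x, φ x ∂μ ≤ ∫⁻ _, (C : ℝ≥0∞) ∂μ := lintegral_mono hφC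
    _ = C := by simp
  have hφfin : ∫⁻ x, φ x ∂μ ≠ ⊤ := ne_top_of_le_ne_top ENNReal.coe_ne_top hφC'
  have main : ∀ ε : ℝ≥0∞, ε ≠ 0 → ε ≤ 1 →
      limsup a atTop ≤ L + ε ∧ L ≤ liminf a atTop + ε := by
    intro ε hε0 hε1
    have hεtop : ε ≠ ⊤ := ne_top_of_le_ne_top one_ne_top hε1
    set D : ℝ≥0∞ := 2 * (C : ℝ≥0∞) + 3 with hD
    have hD0 : D ≠ 0 := by simp [hD]
    have hDtop : D ≠ ⊤ :=
      ENNReal.add_ne_top.mpr ⟨ENNReal.mul_ne_top (by norm_num) ENNReal.coe_ne_top, by norm_num⟩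
    set ε₁ : ℝ≥0∞ := ε / D with hε₁
    have hε₁0 : ε₁ ≠ 0 := by
      rw [hε₁, Ne, ENNReal.div_eq_zero_iff]
      exact not_or.mpr ⟨hε0, hDtop⟩
    have hε₁le : ε₁ ≤ ε := by
      have h1D : (1 : ℝ≥0∞) ≤ D := by
        rw [hD]; calc (1:ℝ≥0∞) ≤ 3 := by norm_num
        _ ≤ 2*(C:ℝ≥0∞)+3 := le_add_self
      calc ε₁ = ε₁ * 1 := (mul_one _).symm
      _ ≤ ε₁ * D := mul_le_mul_right h1D _
      _ = ε := ENNReal.div_mul_cancel hD0 hDtop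
    have hε₁1 : ε₁ ≤ 1 := hε₁le.trans hε1
    -- truncation of f
    have hptw : ∀ x, (⨆ n : ℕ, min (f x) (n : ℝ≥0∞)) = f x := by
      intro x
      apply le_antisymm (iSup_le fun n => min_le_left _ _)
      rcases eq_or_ne (f x) ⊤ with h | h
      · rw [h]
        calc (⊤ : ℝ≥0∞) = ⨆ n : ℕ, (n : ℝ≥0∞) := ENNReal.iSup_natCast.symm
        _ ≤ ⨆ n : ℕ, min (⊤ : ℝ≥0∞) (n : ℝ≥0∞) := iSup_mono fun n => by simp
      · obtain ⟨n, hn⟩ := ENNReal.exists_nat_gt h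
        calc f x = min (f x) (n : ℝ≥0∞) := (min_eq_left hn.le).symm
        _ ≤ ⨆ n : ℕ, min (f x) (n : ℝ≥0∞) := le_iSup (fun n : ℕ => min (f x) (n : ℝ≥0∞)) n
    have hsupf : (⨆ n : ℕ, ∫⁻ x, min (f x) (n : ℝ≥0∞) ∂μ) = ∫⁻ x, f x ∂μ := by
      rw [← lintegral_iSup (fun n => hfm.min measurable_const)
        (fun i j hij x => min_le_min le_rfl (by exact_mod_cast Nat.cast_le.mpr hij))]
      exact lintegral_congr hptw
    obtain ⟨N, hN⟩ := exists_le_add hsupf hfin hε₁0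
    set M : ℝ≥0∞ := ((N + 1 : ℕ) : ℝ≥0∞) with hM
    have hM0 : M ≠ 0 := by simp [hM]
    have hMtop : M ≠ ⊤ := ENNReal.natCast_ne_top _
    have hM1 : (1 : ℝ≥0∞) ≤ M := by
      rw [hM]; exact_mod_cast Nat.one_le_iff_ne_zero.mpr (Nat.succ_ne_zero N)
    set fM : α → ℝ≥0∞ := fun x => min (f x) M with hfM
    have hfM_meas : Measurable fM := hfm.min measurable_const
    have hfM_le_f : ∀ x, fM x ≤ f x := fun x => min_le_left _ _
    have hfM_le_M : ∀ x, fM x ≤ M := fun x => min_le_right _ _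
    have hfM_int_le : ∫⁻ x, fM x ∂μ ≤ ∫⁻ x, f x ∂μ := lintegral_mono hfM_le_f
    have hfM_fin : ∫⁻ x, fM x ∂μ ≠ ⊤ := ne_top_of_le_ne_top hfin hfM_int_le
    have hfM_int_M : ∫⁻ x, fM x ∂μ ≤ M := by
      calc ∫⁻ x, fM x ∂μ ≤ ∫⁻ _, M ∂μ := lintegral_mono hfM_le_M
      _ = M := by simp
    have hf_approx : ∫⁻ x, f x ∂μ ≤ ∫⁻ x, fM x ∂μ + ε₁ := by
      refine hN.trans (add_le_add_left (lintegral_mono fun x => ?_) _)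
      exact min_le_min le_rfl (by exact_mod_cast Nat.cast_le.mpr (Nat.le_succ N))
    have hsub_f : ∫⁻ x, (f x - fM x) ∂μ ≤ ε₁ := by
      rw [lintegral_sub hfM_meas hfM_fin (Filter.Eventually.of_forall hfM_le_f)]
      exact tsub_le_iff_left.mpr hf_approx
    -- simple approximations
    set δ : ℝ≥0∞ := ε₁ / M with hδ
    have hδ0 : δ ≠ 0 := by
      rw [hδ, Ne, ENNReal.div_eq_zero_iff]
      exact not_or.mpr ⟨hε₁0, hMtop⟩
    have hδ_le : δ ≤ ε₁ := by
      calc δ = δ * 1 := (mul_one _).symm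
      _ ≤ δ * M := mul_le_mul_right hM1 _
      _ = ε₁ := ENNReal.div_mul_cancel hM0 hMtop
    obtain ⟨s, hs_le, hs_int⟩ := approx_simple hφ hφfin hδ0
    obtain ⟨u, hu_le, hu_int⟩ := approx_simple hfM_meas hfM_fin hε₁0
    have mscoe : Measurable fun x => (s x : ℝ≥0∞) :=
      measurable_coe_nnreal_ennreal.comp s.measurable
    have mucoe : Measurable fun x => (u x : ℝ≥0∞) :=
      measurable_coe_nnreal_ennreal.comp u.measurable
    have hs_int_le : ∫⁻ x, (s x : ℝ≥0∞) ∂μ ≤ ∫⁻ x, φ x ∂μ := lintegral_mono hs_le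
    have hs_fin : ∫⁻ x, (s x : ℝ≥0∞) ∂μ ≠ ⊤ := ne_top_of_le_ne_top hφfin hs_int_le
    have hu_int_le : ∫⁻ x, (u x : ℝ≥0∞) ∂μ ≤ ∫⁻ x, fM x ∂μ := lintegral_mono hu_le
    have hu_fin : ∫⁻ x, (u x : ℝ≥0∞) ∂μ ≠ ⊤ := ne_top_of_le_ne_top hfM_fin hu_int_le
    set c : ℕ → ℝ≥0∞ := fun t => ∫⁻ x, (s (T^[t] x) : ℝ≥0∞) * (u x : ℝ≥0∞) ∂μ with hcdef
    have hc : Tendsto c atTop (𝓝 ((∫⁻ x, (s x : ℝ≥0∞) ∂μ) * ∫⁻ x, (u x : ℝ≥0∞) ∂μ)) :=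
      stepC hT hmix s u
    have hca : ∀ t, c t ≤ a t := fun t =>
      lintegral_mono fun x => mul_le_mul' (hs_le _) ((hu_le x).trans (hfM_le_f x))
    -- upper estimate
    have hupper : ∀ t, a t ≤ c t + ((C : ℝ≥0∞) * ε₁ + ε₁ + (C : ℝ≥0∞) * ε₁) := by
      intro t
      have mφT : Measurable fun x => φ (T^[t] x) := hφ.comp (hT.iterate t)
      have msT : Measurable fun x => (s (T^[t] x) : ℝ≥0∞) := mscoe.comp (hT.iterate t)
      have e1 : a t = ∫⁻ x, φ (T^[t] x) * fM x ∂μ + ∫⁻ x, φ (T^[t] x) * (f x - fM x) ∂μ := by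
        rw [← lintegral_add_left (show Measurable fun x => φ (T^[t] x) * fM x from mφT.mul hfM_meas)]
        refine lintegral_congr fun x => ?_
        rw [← mul_add]
        congr 1
        rw [add_comm]
        exact (tsub_add_cancel_of_le (hfM_le_f x)).symm
      have e2 : ∫⁻ x, φ (T^[t] x) * (f x - fM x) ∂μ ≤ (C : ℝ≥0∞) * ε₁ := by
        calc ∫⁻ x, φ (T^[t] x) * (f x - fM x) ∂μ
            ≤ ∫⁻ x, (C : ℝ≥0∞) * (f x - fM x) ∂μ :=
          lintegral_mono fun x => mul_le_mul_left (hφC _) _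
        _ = (C : ℝ≥0∞) * ∫⁻ x, (f x - fM x) ∂μ := lintegral_const_mul _ (hfm.sub hfM_meas)
        _ ≤ (C : ℝ≥0∞) * ε₁ := mul_le_mul_right hsub_f _
      have e3 : ∫⁻ x, φ (T^[t] x) * fM x ∂μ
          = ∫⁻ x, (s (T^[t] x) : ℝ≥0∞) * fM x ∂μ
            + ∫⁻ x, (φ (T^[t] x) - (s (T^[t] x) : ℝ≥0∞)) * fM x ∂μ := by
        rw [← lintegral_add_left (show Measurable fun x => (s (T^[t] x) : ℝ≥0∞) * fM x from msT.mul hfM_meas)]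
        refine lintegral_congr fun x => ?_
        rw [← add_mul]
        congr 1
        rw [add_comm]
        exact (tsub_add_cancel_of_le (hs_le (T^[t] x))).symm
      have e4 : ∫⁻ x, (φ (T^[t] x) - (s (T^[t] x) : ℝ≥0∞)) * fM x ∂μ ≤ ε₁ := by
        have hsubm : Measurable fun y => φ y - (s y : ℝ≥0∞) := hφ.sub mscoe
        have hcomm : ∀ x : α, (φ (T^[t] x) - (s (T^[t] x) : ℝ≥0∞)) * M
            = M * (φ (T^[t] x) - (s (T^[t] x) : ℝ≥0∞)) := fun x => mul_comm _ _
        calc ∫⁻ x, (φ (T^[t] x) - (s (T^[t] x) : ℝ≥0∞)) * fM x ∂μ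
            ≤ ∫⁻ x, (φ (T^[t] x) - (s (T^[t] x) : ℝ≥0∞)) * M ∂μ :=
          lintegral_mono fun x => mul_le_mul_right (hfM_le_M x) _
        _ = M * ∫⁻ x, (φ (T^[t] x) - (s (T^[t] x) : ℝ≥0∞)) ∂μ := by
          simp_rw [hcomm]
          exact lintegral_const_mul _ (hsubm.comp (hT.iterate t))
        _ = M * ∫⁻ x, (φ x - (s x : ℝ≥0∞)) ∂μ := by
          rw [lint_iter_inv hT hinv hsubm]
        _ ≤ M * δ := by
          refine mul_le_mul_right ?_ _
          rw [lintegral_sub mscoe hs_fin (Filter.Eventually.of_forall hs_le)]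
          exact tsub_le_iff_left.mpr hs_int
        _ = ε₁ := ENNReal.mul_div_cancel hM0 hMtop
      have e5 : ∫⁻ x, (s (T^[t] x) : ℝ≥0∞) * fM x ∂μ
          = c t + ∫⁻ x, (s (T^[t] x) : ℝ≥0∞) * (fM x - (u x : ℝ≥0∞)) ∂μ := by
        rw [hcdef, ← lintegral_add_left (show Measurable fun x => (s (T^[t] x) : ℝ≥0∞) * (u x : ℝ≥0∞) from msT.mul mucoe)]
        refine lintegral_congr fun x => ?_
        rw [← mul_add]
        congr 1
        rw [add_comm]
        exact (tsub_add_cancel_of_le (hu_le x)).symm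
      have e6 : ∫⁻ x, (s (T^[t] x) : ℝ≥0∞) * (fM x - (u x : ℝ≥0∞)) ∂μ ≤ (C : ℝ≥0∞) * ε₁ := by
        calc ∫⁻ x, (s (T^[t] x) : ℝ≥0∞) * (fM x - (u x : ℝ≥0∞)) ∂μ
            ≤ ∫⁻ x, (C : ℝ≥0∞) * (fM x - (u x : ℝ≥0∞)) ∂μ :=
          lintegral_mono fun x => mul_le_mul_left ((hs_le _).trans (hφC _)) _
        _ = (C : ℝ≥0∞) * ∫⁻ x, (fM x - (u x : ℝ≥0∞)) ∂μ :=
          lintegral_const_mul _ (hfM_meas.sub mucoe)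
        _ ≤ (C : ℝ≥0∞) * ε₁ := by
          refine mul_le_mul_right ?_ _
          rw [lintegral_sub mucoe hu_fin (Filter.Eventually.of_forall hu_le)]
          exact tsub_le_iff_left.mpr hu_int
      calc a t = (c t + ∫⁻ x, (s (T^[t] x) : ℝ≥0∞) * (fM x - (u x : ℝ≥0∞)) ∂μ
            + ∫⁻ x, (φ (T^[t] x) - (s (T^[t] x) : ℝ≥0∞)) * fM x ∂μ)
            + ∫⁻ x, φ (T^[t] x) * (f x - fM x) ∂μ := by rw [e1, e3, e5]
      _ ≤ ((c t + (C : ℝ≥0∞) * ε₁) + ε₁) + (C : ℝ≥0∞) * ε₁ :=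
        add_le_add (add_le_add (add_le_add le_rfl e6) e4) e2
      _ = c t + ((C : ℝ≥0∞) * ε₁ + ε₁ + (C : ℝ≥0∞) * ε₁) := by ring
    have hLsu : (∫⁻ x, (s x : ℝ≥0∞) ∂μ) * ∫⁻ x, (u x : ℝ≥0∞) ∂μ ≤ L :=
      mul_le_mul' hs_int_le (hu_int_le.trans hfM_int_le)
    constructor
    · -- limsup bound
      have h1 : limsup a atTop ≤ limsup (fun t => c t + ((C:ℝ≥0∞)*ε₁ + ε₁ + (C:ℝ≥0∞)*ε₁)) atTop :=
        limsup_le_limsup (Filter.Eventually.of_forall hupper)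
      have h2 : limsup (fun t => c t + ((C:ℝ≥0∞)*ε₁ + ε₁ + (C:ℝ≥0∞)*ε₁)) atTop
          = (∫⁻ x, (s x : ℝ≥0∞) ∂μ) * (∫⁻ x, (u x : ℝ≥0∞) ∂μ)
            + ((C:ℝ≥0∞)*ε₁ + ε₁ + (C:ℝ≥0∞)*ε₁) :=
        (hc.add tendsto_const_nhds).limsup_eq
      have hK : (C:ℝ≥0∞)*ε₁ + ε₁ + (C:ℝ≥0∞)*ε₁ ≤ ε := by
        have h3 : (C:ℝ≥0∞)*ε₁ + ε₁ + (C:ℝ≥0∞)*ε₁ ≤ D * ε₁ := by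
          rw [hD]
          have h4 : (2*(C:ℝ≥0∞)+3) * ε₁
              = (C:ℝ≥0∞)*ε₁ + ε₁ + (C:ℝ≥0∞)*ε₁ + (ε₁ + ε₁) := by ring
          rw [h4]
          exact le_self_add
        exact h3.trans (le_of_eq (ENNReal.mul_div_cancel hD0 hDtop))
      rw [h2] at h1
      exact h1.trans (add_le_add hLsu hK)
    · -- liminf bound
      have h1 : (∫⁻ x, (s x : ℝ≥0∞) ∂μ) * ∫⁻ x, (u x : ℝ≥0∞) ∂μ ≤ liminf a atTop := by
        have := liminf_le_liminf (f := atTop) (Filter.Eventually.of_forall hca)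
        rwa [hc.liminf_eq] at this
      have h2 : L ≤ (∫⁻ x, (s x : ℝ≥0∞) ∂μ) * (∫⁻ x, (u x : ℝ≥0∞) ∂μ) + ε := by
        have hf_le : ∫⁻ x, f x ∂μ ≤ (∫⁻ x, (u x : ℝ≥0∞) ∂μ) + (ε₁ + ε₁) := by
          calc ∫⁻ x, f x ∂μ ≤ ∫⁻ x, fM x ∂μ + ε₁ := hf_approx
          _ ≤ ((∫⁻ x, (u x : ℝ≥0∞) ∂μ) + ε₁) + ε₁ := add_le_add_left hu_int _
          _ = (∫⁻ x, (u x : ℝ≥0∞) ∂μ) + (ε₁ + ε₁) := by ring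
        calc L ≤ ((∫⁻ x, (s x : ℝ≥0∞) ∂μ) + δ) * ((∫⁻ x, (u x : ℝ≥0∞) ∂μ) + (ε₁ + ε₁)) :=
          mul_le_mul' hs_int hf_le
        _ = (∫⁻ x, (s x : ℝ≥0∞) ∂μ) * (∫⁻ x, (u x : ℝ≥0∞) ∂μ)
            + ((∫⁻ x, (s x : ℝ≥0∞) ∂μ) * (ε₁ + ε₁) + δ * (∫⁻ x, (u x : ℝ≥0∞) ∂μ)
              + δ * (ε₁ + ε₁)) := by ring
        _ ≤ (∫⁻ x, (s x : ℝ≥0∞) ∂μ) * (∫⁻ x, (u x : ℝ≥0∞) ∂μ)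
            + ((C:ℝ≥0∞) * (ε₁ + ε₁) + ε₁ + (ε₁ + ε₁)) := by
          refine add_le_add le_rfl (add_le_add (add_le_add ?_ ?_) ?_)
          · exact mul_le_mul_left (hs_int_le.trans hφC') _
          · calc δ * (∫⁻ x, (u x : ℝ≥0∞) ∂μ) ≤ δ * M :=
              mul_le_mul_right (hu_int_le.trans hfM_int_M) _
            _ = ε₁ := ENNReal.div_mul_cancel hM0 hMtop
          · calc δ * (ε₁ + ε₁) ≤ 1 * (ε₁ + ε₁) :=
              mul_le_mul_left (hδ_le.trans hε₁1) _
            _ = ε₁ + ε₁ := one_mul _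
        _ ≤ (∫⁻ x, (s x : ℝ≥0∞) ∂μ) * (∫⁻ x, (u x : ℝ≥0∞) ∂μ) + ε := by
          refine add_le_add le_rfl ?_
          have h5 : (C:ℝ≥0∞) * (ε₁ + ε₁) + ε₁ + (ε₁ + ε₁) = (2*(C:ℝ≥0∞)+3) * ε₁ := by ring
          rw [h5]
          exact le_of_eq (ENNReal.mul_div_cancel hD0 hDtop)
      exact h2.trans (add_le_add h1 le_rfl)
  have hlimsup : limsup a atTop ≤ L := by
    refine ENNReal.le_of_forall_pos_le_add fun η hη _ => ?_
    have hmin0 : (min (η : ℝ≥0∞) 1) ≠ 0 :=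
      (lt_min (ENNReal.coe_pos.mpr hη) one_pos).ne'
    exact ((main _ hmin0 (min_le_right _ _)).1).trans
      (add_le_add le_rfl (min_le_left _ _))
  have hliminf : L ≤ liminf a atTop := by
    refine ENNReal.le_of_forall_pos_le_add fun η hη _ => ?_
    have hmin0 : (min (η : ℝ≥0∞) 1) ≠ 0 :=
      (lt_min (ENNReal.coe_pos.mpr hη) one_pos).ne'
    exact ((main _ hmin0 (min_le_right _ _)).2).trans
      (add_le_add le_rfl (min_le_left _ _))
  exact tendsto_of_le_liminf_of_limsup_le hliminf hlimsup

lemma keyConv {U : Type*} [MeasurableSpace U] [TopologicalSpace U] [OpensMeasurableSpace U]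
    {T : α → α} (hT : Measurable T) (ξ : ProbabilityMeasure α)
    (hinv : (ξ : Measure α).map T = (ξ : Measure α))
    (hmix : ∀ A B : Set α, MeasurableSet A → MeasurableSet B →
      Tendsto (fun t : ℕ => (ξ : Measure α) (T^[t] ⁻¹' A ∩ B)) atTop
        (𝓝 ((ξ : Measure α) A * (ξ : Measure α) B)))
    (ν : ProbabilityMeasure α) (hν : (ν : Measure α) ≪ (ξ : Measure α))
    (r : α → U) (hr : Measurable r) :
    Tendsto (fun t : ℕ => pushPM r hr (pushPM (T^[t]) (hT.iterate t) ν)) atTop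
      (𝓝 (pushPM r hr ξ)) := by
  rw [ProbabilityMeasure.tendsto_iff_forall_lintegral_tendsto]
  intro γ
  set f := (ν : Measure α).rnDeriv (ξ : Measure α) with hfdef
  have hfm : Measurable f := Measure.measurable_rnDeriv _ _
  have hwd : (ξ : Measure α).withDensity f = (ν : Measure α) :=
    Measure.withDensity_rnDeriv_eq _ _ hν
  have hf1 : ∫⁻ x, f x ∂(ξ : Measure α) = 1 := by
    rw [hfdef, Measure.lintegral_rnDeriv hν]
    simp
  have hγm : Measurable fun u : U => (γ u : ℝ≥0∞) :=
    measurable_coe_nnreal_ennreal.comp γ.continuous.measurable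
  set φ : α → ℝ≥0∞ := fun x => (γ (r x) : ℝ≥0∞) with hφdef
  have hφm : Measurable φ := hγm.comp hr
  set C : ℝ≥0 := nndist 0 γ with hC
  have hφC : ∀ x, φ x ≤ (C : ℝ≥0∞) := fun x =>
    ENNReal.coe_le_coe.mpr (γ.apply_le_nndist_zero (r x))
  have key := mixKey (μ := (ξ : Measure α)) hT hinv hmix hφm hfm hφC
    (by rw [hf1]; exact one_ne_top)
  have hLHS : ∀ t : ℕ, ∫⁻ u, (γ u : ℝ≥0∞)
      ∂((pushPM r hr (pushPM (T^[t]) (hT.iterate t) ν)) : Measure U)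
      = ∫⁻ x, φ (T^[t] x) * f x ∂(ξ : Measure α) := by
    intro t
    show ∫⁻ u, (γ u : ℝ≥0∞) ∂(((ν : Measure α).map (T^[t])).map r) = _
    rw [lintegral_map hγm hr,
      lintegral_map (show Measurable fun x => (γ (r x) : ℝ≥0∞) from hγm.comp hr) (hT.iterate t)]
    rw [← hwd, lintegral_withDensity_eq_lintegral_mul _ hfm
      (show Measurable fun x => φ (T^[t] x) from hφm.comp (hT.iterate t))]
    exact lintegral_congr fun x => mul_comm _ _
  have hRHS : ∫⁻ u, (γ u : ℝ≥0∞) ∂((pushPM r hr ξ) : Measure U)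
      = (∫⁻ x, φ x ∂(ξ : Measure α)) * ∫⁻ x, f x ∂(ξ : Measure α) := by
    show ∫⁻ u, (γ u : ℝ≥0∞) ∂((ξ : Measure α).map r) = _
    rw [lintegral_map hγm hr, hf1, mul_one]
  simp_rw [hLHS, hRHS]
  exact key

end Helpers

/-- Time-uniform density-forecast bound in the observation space for a mixing
measure `ξ` of the state-space dynamics `Φ`, with conjugate proxy dynamics `Φ̂` and readouts
`h, ĥ`. -/
theorem statement8 {E : Type*} [NormedAddCommGroup E] [NormedSpace ℝ E]
    {H : Type*} [TopologicalSpace H] (I : ModelWithCorners ℝ E H)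
    {Xt : Type*} [MetricSpace Xt] [CompactSpace Xt] [ChartedSpace H Xt]
    [IsManifold I ((⊤ : ℕ∞) : WithTop ℕ∞) Xt] [MeasurableSpace Xt] [BorelSpace Xt]
    {U : Type*} [MetricSpace U] [TopologicalSpace.SeparableSpace U]
    [MeasurableSpace U] [BorelSpace U]
    -- `Φ, Φ̂ ∈ Diff¹(X̃)`, conjugate by the homeomorphism `g`:
    (Φ Φh g : Xt ≃ₜ Xt)
    (hΦ : ContMDiff I I 1 ⇑Φ) (hΦinv : ContMDiff I I 1 ⇑Φ.symm)
    (hΦh : ContMDiff I I 1 ⇑Φh) (hΦhinv : ContMDiff I I 1 ⇑Φh.symm)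
    (hconj : ∀ x, g (Φ x) = Φh (g x))
    -- continuous readouts:
    (h hh : Xt → U) (hhc : Continuous h) (hhhc : Continuous hh)
    -- `dPU` is a metric on `P(U)` metrizing the weak topology:
    (dPU : ProbabilityMeasure U → ProbabilityMeasure U → ℝ)
    (hdP_symm : ∀ a b, dPU a b = dPU b a)
    (hdP_tri : ∀ a b c, dPU a c ≤ dPU a b + dPU b c)
    (hdP_eq : ∀ a b, dPU a b = 0 ↔ a = b)
    (hdP_top : ∀ s : Set (ProbabilityMeasure U),
      IsOpen s ↔ ∀ a ∈ s, ∃ ε > (0 : ℝ), ∀ b, dPU a b < ε → b ∈ s)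
    -- `ξ` mixing for `Φ`, `ξ₀ ≪ ξ`, `g⁻¹` nonsingular w.r.t. `ξ`:
    (ξ ξ₀ : ProbabilityMeasure Xt)
    (hmix : IsMixingM ⇑Φ (ξ : Measure Xt))
    (habs : (ξ₀ : Measure Xt) ≪ (ξ : Measure Xt))
    (hns : (ξ : Measure Xt).map ⇑g.symm ≪ (ξ : Measure Xt)) :
    Filter.limsup
      (fun t : ℕ => dPU
        (pushPM h hhc.measurable
          (pushPM (⇑Φ)^[t] (Φ.continuous.measurable.iterate t) ξ₀))
        (pushPM hh hhhc.measurable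
          (pushPM (⇑Φh)^[t] (Φh.continuous.measurable.iterate t) ξ₀)))
      atTop
      ≤ dPU (pushPM h hhc.measurable ξ) (pushPM hh hhhc.measurable ξ) +
        dPU (pushPM hh hhhc.measurable ξ)
          (pushPM hh hhhc.measurable (pushPM ⇑g g.continuous.measurable ξ)) := by
  obtain ⟨hinv, hmixp⟩ := hmix
  have hgm : Measurable ⇑g := g.continuous.measurable
  have hgsm : Measurable ⇑g.symm := g.symm.continuous.measurable
  have hΦm : Measurable ⇑Φ := Φ.continuous.measurable
  have hconj_iter : ∀ (t : ℕ) (x : Xt), (⇑Φh)^[t] (g x) = g ((⇑Φ)^[t] x) := by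
    intro t
    induction t with
    | zero => simp
    | succ n ih =>
      intro x
      rw [Function.iterate_succ_apply', Function.iterate_succ_apply', ih, hconj]
  set ν' : ProbabilityMeasure Xt := pushPM (⇑g.symm) hgsm ξ₀ with hν'
  have hν'abs : (ν' : Measure Xt) ≪ (ξ : Measure Xt) := by
    have h1 : (ν' : Measure Xt) = (ξ₀ : Measure Xt).map ⇑g.symm := rfl
    rw [h1]
    exact (habs.map hgsm).trans hns
  set A : ProbabilityMeasure U := pushPM h hhc.measurable ξ with hA
  set B : ProbabilityMeasure U := pushPM hh hhhc.measurable ξ with hB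
  set Bg : ProbabilityMeasure U :=
    pushPM hh hhhc.measurable (pushPM ⇑g g.continuous.measurable ξ) with hBg
  set av : ℕ → ProbabilityMeasure U := fun t => pushPM h hhc.measurable
    (pushPM (⇑Φ)^[t] (Φ.continuous.measurable.iterate t) ξ₀) with hav
  set bv : ℕ → ProbabilityMeasure U := fun t => pushPM hh hhhc.measurable
    (pushPM (⇑Φh)^[t] (Φh.continuous.measurable.iterate t) ξ₀) with hbv
  have hconv1 : Tendsto av atTop (𝓝 A) :=
    keyConv hΦm ξ hinv hmixp ξ₀ habs h hhc.measurable
  have hident : ∀ t : ℕ, bv t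
      = pushPM (hh ∘ ⇑g) (hhhc.measurable.comp hgm) (pushPM (⇑Φ)^[t] (hΦm.iterate t) ν') := by
    intro t
    apply Subtype.ext
    show ((ξ₀ : Measure Xt).map ((⇑Φh)^[t])).map hh
        = (((ξ₀ : Measure Xt).map ⇑g.symm).map ((⇑Φ)^[t])).map (hh ∘ ⇑g)
    rw [Measure.map_map hhhc.measurable ((Φh.continuous.measurable).iterate t),
      Measure.map_map (hhhc.measurable.comp hgm) (hΦm.iterate t),
      Measure.map_map ((hhhc.measurable.comp hgm).comp (hΦm.iterate t)) hgsm]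
    congr 1
    funext x
    show hh ((⇑Φh)^[t] x) = hh (g ((⇑Φ)^[t] (g.symm x)))
    have hx : g ((⇑Φ)^[t] (g.symm x)) = (⇑Φh)^[t] x := by
      rw [← hconj_iter t (g.symm x), Homeomorph.apply_symm_apply]
    rw [hx]
  have hident2 : pushPM (hh ∘ ⇑g) (hhhc.measurable.comp hgm) ξ = Bg :=
    Subtype.ext (Measure.map_map hhhc.measurable hgm).symm
  have hconv2 : Tendsto bv atTop (𝓝 Bg) := by
    have hk := keyConv hΦm ξ hinv hmixp ν' hν'abs (hh ∘ ⇑g) (hhhc.measurable.comp hgm)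
    rw [hident2] at hk
    exact hk.congr fun t => (hident t).symm
  -- metric facts
  have hnonneg : ∀ a b : ProbabilityMeasure U, 0 ≤ dPU a b := by
    intro a b
    have h0 : dPU a a = 0 := (hdP_eq a a).mpr rfl
    have ht := hdP_tri a b a
    have hs := hdP_symm a b
    linarith
  have hball : ∀ (P : ProbabilityMeasure U) (c : ℕ → ProbabilityMeasure U),
      Tendsto c atTop (𝓝 P) → ∀ ε : ℝ, 0 < ε → ∀ᶠ t in atTop, dPU P (c t) < ε := by
    intro P c hc ε hε
    have hopen : IsOpen {b | dPU P b < ε} := by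
      rw [hdP_top]
      intro b hb
      simp only [Set.mem_setOf_eq] at hb
      refine ⟨ε - dPU P b, by linarith, fun c' hc' => ?_⟩
      have ht := hdP_tri P b c'
      simp only [Set.mem_setOf_eq]
      linarith
    have hmem : P ∈ {b | dPU P b < ε} := by
      simp only [Set.mem_setOf_eq, (hdP_eq P P).mpr rfl]
      exact hε
    filter_upwards [hc.eventually (hopen.eventually_mem hmem)] with t ht using ht
  apply _root_.le_of_forall_pos_le_add
  intro ε hε
  have h1 := hball A av hconv1 (ε / 2) (by linarith)
  have h2 := hball Bg bv hconv2 (ε / 2) (by linarith)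
  have hev : ∀ᶠ t in atTop, dPU (av t) (bv t) ≤ dPU A B + dPU B Bg + ε := by
    filter_upwards [h1, h2] with t h1t h2t
    have t1 := hdP_tri (av t) A (bv t)
    have t2 := hdP_tri A B (bv t)
    have t3 := hdP_tri B Bg (bv t)
    have hs := hdP_symm A (av t)
    linarith
  have hcb : IsCoboundedUnder (· ≤ ·) atTop (fun t => dPU (av t) (bv t)) := by
    apply Filter.IsBoundedUnder.isCoboundedUnder_le
    exact Filter.isBoundedUnder_of ⟨0, fun t => hnonneg _ _⟩
  exact limsup_le_of_le hcb hev

end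
end

section
/- Let X be a smooth compact manifold with metric d and let φ, φ̂ ∈ Diff¹(X) be topologically conjugate by a homeomorphism g : X → X, i.e. g ∘ φ = φ̂ ∘ g. Let μ be a φ-invariant Borel probability measure and let d_P be a metric metrizing the weak topology on P(X). Then for any x ∈ Basin_φ(μ) ∩ g(Basin_φ(μ)), limsup_{T→∞} d_P( (1/T) Σ_{t=0}^{T-1} δ_{φ^t(x)}, (1/T) Σ_{t=0}^{T-1} δ_{φ̂^t(x)} ) ≤ d_P(μ, g_*μ). -/
open MeasureTheory Filter Topology ENNReal

noncomputable section

/-- The Dirac probability measure at a point. -/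
def diracPM {α : Type*} [MeasurableSpace α] (x : α) : ProbabilityMeasure α :=
  ⟨Measure.dirac x, inferInstance⟩

/-- Empirical measure `(1/(T+1)) ∑_{t=0}^{T} δ_{f^t(x)}`. -/
def empMeas {α : Type*} [MeasurableSpace α] (f : α → α) (x : α) (T : ℕ) :
    ProbabilityMeasure α :=
  avgPM (fun t => diracPM (f^[t] x)) T

/-- Basin of a probability measure: points whose empirical measures converge weakly to `μ`. -/
def mBasin {α : Type*} [TopologicalSpace α] [MeasurableSpace α] [OpensMeasurableSpace α]
    (f : α → α) (μ : ProbabilityMeasure α) : Set α :=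
  {x | Tendsto (fun T : ℕ => empMeas f x T) atTop (𝓝 μ)}

/-- For topologically conjugate `C¹` diffeomorphisms `φ, φ̂` of a smooth compact
manifold and a `φ`-invariant measure `μ`, the empirical measures along the `φ`- and `φ̂`-orbits of
any `x ∈ Basin_φ(μ) ∩ g(Basin_φ(μ))` stay asymptotically within `dP(μ, g_*μ)` of each other. -/
theorem statement19 {E : Type*} [NormedAddCommGroup E] [NormedSpace ℝ E]
    {H : Type*} [TopologicalSpace H] (I : ModelWithCorners ℝ E H)
    {X : Type*} [MetricSpace X] [CompactSpace X] [ChartedSpace H X]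
    [IsManifold I ((⊤ : ℕ∞) : WithTop ℕ∞) X] [MeasurableSpace X] [BorelSpace X]
    -- `φ, φ̂ ∈ Diff¹(X)`, conjugate by the homeomorphism `g`:
    (φ φh g : X ≃ₜ X)
    (hφ : ContMDiff I I 1 ⇑φ) (hφinv : ContMDiff I I 1 ⇑φ.symm)
    (hφh : ContMDiff I I 1 ⇑φh) (hφhinv : ContMDiff I I 1 ⇑φh.symm)
    (hconj : ∀ x, g (φ x) = φh (g x))
    -- `μ` is a `φ`-invariant probability measure:
    (μ : ProbabilityMeasure X) (hinv : (μ : Measure X).map ⇑φ = (μ : Measure X))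
    -- `dP` is a metric on `P(X)` metrizing the weak topology:
    (dP : ProbabilityMeasure X → ProbabilityMeasure X → ℝ)
    (hdP_symm : ∀ a b, dP a b = dP b a)
    (hdP_tri : ∀ a b c, dP a c ≤ dP a b + dP b c)
    (hdP_eq : ∀ a b, dP a b = 0 ↔ a = b)
    (hdP_top : ∀ s : Set (ProbabilityMeasure X),
      IsOpen s ↔ ∀ a ∈ s, ∃ ε > (0 : ℝ), ∀ b, dP a b < ε → b ∈ s) :
    ∀ x ∈ mBasin ⇑φ μ ∩ ⇑g '' mBasin ⇑φ μ,
      Filter.limsup (fun T : ℕ => dP (empMeas ⇑φ x T) (empMeas ⇑φh x T)) atTop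
        ≤ dP μ (pushPM ⇑g g.continuous.measurable μ) := by
  -- basic facts about dP
  have hnonneg : ∀ a b, 0 ≤ dP a b := by
    intro a b
    have h := hdP_tri a b a
    rw [(hdP_eq a a).2 rfl, hdP_symm b a] at h
    linarith
  have hself : ∀ a, dP a a = 0 := fun a => (hdP_eq a a).2 rfl
  -- convergence in 𝓝 implies dP → 0
  have key : ∀ (a : ProbabilityMeasure X) (u : ℕ → ProbabilityMeasure X),
      Tendsto u atTop (𝓝 a) → Tendsto (fun n => dP a (u n)) atTop (𝓝 0) := by
    intro a u hu
    rw [tendsto_order]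
    constructor
    · intro c hc
      exact Eventually.of_forall fun n => lt_of_lt_of_le hc (hnonneg a (u n))
    · intro c hc
      have hopen : IsOpen {b | dP a b < c} := by
        rw [hdP_top]
        intro b hb
        refine ⟨c - dP a b, by simpa using hb, fun c' hc' => ?_⟩
        have := hdP_tri a b c'
        simp only [Set.mem_setOf_eq]
        linarith
      have hmem : {b | dP a b < c} ∈ 𝓝 a := hopen.mem_nhds (by simpa [hself] using hc)
      exact hu hmem
  rintro x ⟨hx, y, hy, rfl⟩
  set gm := g.continuous.measurable with hgm
  set ν := pushPM ⇑g gm μ with hν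
  -- empirical measure of φh along g y is pushforward of empirical measure of φ along y
  have horb : ∀ t : ℕ, (⇑φh)^[t] (g y) = g ((⇑φ)^[t] y) := by
    intro t
    induction t with
    | zero => simp
    | succ n ih => rw [Function.iterate_succ_apply', Function.iterate_succ_apply', ih, hconj]
  have hemp : ∀ T, empMeas ⇑φh (g y) T = pushPM ⇑g gm (empMeas ⇑φ y T) := by
    intro T
    apply Subtype.ext
    change (((T + 1 : ℕ) : ℝ≥0∞)⁻¹ • ∑ t ∈ Finset.range (T + 1),
        Measure.dirac ((⇑φh)^[t] (g y)))
      = Measure.map ⇑g (((T + 1 : ℕ) : ℝ≥0∞)⁻¹ • ∑ t ∈ Finset.range (T + 1),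
        Measure.dirac ((⇑φ)^[t] y))
    rw [Measure.map_smul]
    congr 1
    induction (T + 1) with
    | zero => simp
    | succ n ih =>
        rw [Finset.sum_range_succ, Finset.sum_range_succ, Measure.map_add _ _ gm, ih,
          Measure.map_dirac' gm, horb]
    
  -- pushPM agrees with ProbabilityMeasure.map
  have hpush_eq : ∀ (ρ : ProbabilityMeasure X),
      pushPM ⇑g gm ρ = ρ.map gm.aemeasurable := fun ρ => Subtype.ext rfl
  -- convergences
  have h1 : Tendsto (fun T => dP μ (empMeas ⇑φ (g y) T)) atTop (𝓝 0) := key μ _ hx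
  have h2 : Tendsto (fun T => pushPM ⇑g gm (empMeas ⇑φ y T)) atTop (𝓝 ν) := by
    simp only [hpush_eq, hν]
    exact ProbabilityMeasure.tendsto_map_of_tendsto_of_continuous _ _ hy g.continuous
  have h3 : Tendsto (fun T => dP ν (pushPM ⇑g gm (empMeas ⇑φ y T))) atTop (𝓝 0) :=
    key ν _ h2
  -- the dominating sequence
  set u : ℕ → ℝ := fun T => dP (empMeas ⇑φ (g y) T) μ + dP μ ν
      + dP ν (pushPM ⇑g gm (empMeas ⇑φ y T)) with hu
  have hle : ∀ T, dP (empMeas ⇑φ (g y) T) (empMeas ⇑φh (g y) T) ≤ u T := by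
    intro T
    rw [hemp T]
    calc dP (empMeas ⇑φ (g y) T) (pushPM ⇑g gm (empMeas ⇑φ y T))
        ≤ dP (empMeas ⇑φ (g y) T) ν + dP ν (pushPM ⇑g gm (empMeas ⇑φ y T)) := hdP_tri _ _ _
      _ ≤ (dP (empMeas ⇑φ (g y) T) μ + dP μ ν) + dP ν (pushPM ⇑g gm (empMeas ⇑φ y T)) := by
          have := hdP_tri (empMeas ⇑φ (g y) T) μ ν
          linarith
  have hulim : Tendsto u atTop (𝓝 (dP μ ν)) := by
    have : Tendsto u atTop (𝓝 (0 + dP μ ν + 0)) := by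
      apply Tendsto.add _ h3
      apply Tendsto.add _ tendsto_const_nhds
      simpa only [hdP_symm] using h1
    simpa using this
  calc Filter.limsup (fun T : ℕ => dP (empMeas ⇑φ (g y) T) (empMeas ⇑φh (g y) T)) atTop
      ≤ Filter.limsup u atTop := by
        exact Filter.limsup_le_limsup (Eventually.of_forall hle)
          (Filter.isCoboundedUnder_le_of_le atTop (fun T => hnonneg _ _)) hulim.isBoundedUnder_le
    _ = dP μ ν := hulim.limsup_eq

end
end
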